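/- arXiv:1411.1793 — 3 statements merged into one kernel-verified Lean document; each statement's English description precedes it below -/
import Mathlib

section
/- Let γ be an oriented simple lattice cycle. Then the sum of col(v)·topw(γ,v) over the vertices v of γ equals 0: Σ_{v vertex of γ} col(v)·topw(γ,v) = 0. -/
open scoped Classical

/-- An oriented simple lattice cycle in the grid graph on `ℤ²`: a cyclic sequence
`v 0, v 1, …, v (n-1), v n = v 0` (encoded as an `n`-periodic function `ℕ → ℤ × ℤ`),
with `n ≥ 4`, vertices pairwise distinct within one period, and consecutive
vertices at Euclidean distance `1`. -/
structure LatticeCycle where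
  n : ℕ
  four_le : 4 ≤ n
  v : ℕ → ℤ × ℤ
  periodic : ∀ i, v (i + n) = v i
  inj : ∀ i j, i < n → j < n → v i = v j → i = j
  step : ∀ i, v (i + 1) - v i = (1, 0) ∨ v (i + 1) - v i = (-1, 0) ∨
    v (i + 1) - v i = (0, 1) ∨ v (i + 1) - v i = (0, -1)

/-- Inclusion of `ℤ²` into `ℝ²`. -/
def toR (v : ℤ × ℤ) : ℝ × ℝ := ((v.1 : ℝ), (v.2 : ℝ))

/-- The image of a lattice cycle: the union of the closed segments `[vᵢ, vᵢ₊₁] ⊆ ℝ²`. -/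
def LatticeCycle.image (γ : LatticeCycle) : Set (ℝ × ℝ) :=
  ⋃ i ∈ Finset.range γ.n, segment ℝ (toR (γ.v i)) (toR (γ.v (i + 1)))

/-- Signed crossing of the directed edge `u → w` with the rightward horizontal ray
from `p`: an edge from `(a,b)` to `(a,b+1)` contributes `+1`, and an edge from
`(a,b+1)` to `(a,b)` contributes `-1`, whenever `a > p₁` and `b ≤ p₂ < b + 1`. -/
noncomputable def vcross (u w : ℤ × ℤ) (p : ℝ × ℝ) : ℤ :=
  if w = (u.1, u.2 + 1) ∧ p.1 < (u.1 : ℝ) ∧ (u.2 : ℝ) ≤ p.2 ∧ p.2 < (u.2 : ℝ) + 1 then 1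
  else if u = (w.1, w.2 + 1) ∧ p.1 < (w.1 : ℝ) ∧ (w.2 : ℝ) ≤ p.2 ∧ p.2 < (w.2 : ℝ) + 1 then -1
  else 0

/-- The winding number of `γ` around `p`: the signed number of directed vertical
edges of `γ` crossing the rightward horizontal ray from `p`. -/
noncomputable def wind (γ : LatticeCycle) (p : ℝ × ℝ) : ℤ :=
  ∑ i ∈ Finset.range γ.n, vcross (γ.v i) (γ.v (i + 1)) p

/-- `γ` is counterclockwise oriented: `wind(γ,p) ∈ {0,1}` for every `p` off the image. -/
def LatticeCycle.ccw (γ : LatticeCycle) : Prop :=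
  ∀ p : ℝ × ℝ, p ∉ γ.image → wind γ p = 0 ∨ wind γ p = 1

/-- `γ` is clockwise oriented: `wind(γ,p) ∈ {-1,0}` for every `p` off the image. -/
def LatticeCycle.cw (γ : LatticeCycle) : Prop :=
  ∀ p : ℝ × ℝ, p ∉ γ.image → wind γ p = -1 ∨ wind γ p = 0

/-- The point `v + (k/2, l/2)`; for `k, l ∈ {-1, 1}` these are the four points of `N_v`. -/
noncomputable def corner (v : ℤ × ℤ) (k l : ℤ) : ℝ × ℝ :=
  ((v.1 : ℝ) + (k : ℝ) / 2, (v.2 : ℝ) + (l : ℝ) / 2)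

/-- The metric weight of `v` with respect to `γ`:
`(1/4) · Σ_{u ∈ N_v} wind(γ,u)`. -/
noncomputable def metricw (γ : LatticeCycle) (v : ℤ × ℤ) : ℚ :=
  ((wind γ (corner v (-1) (-1)) + wind γ (corner v (-1) 1) +
    wind γ (corner v 1 (-1)) + wind γ (corner v 1 1) : ℤ) : ℚ) / 4

/-- The set of values `{wind(γ,u) : u ∈ N_v}` (each distinct value counted once). -/
noncomputable def windSet (γ : LatticeCycle) (v : ℤ × ℤ) : Finset ℤ :=
  {wind γ (corner v (-1) (-1)), wind γ (corner v (-1) 1),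
   wind γ (corner v 1 (-1)), wind γ (corner v 1 1)}

/-- The topological weight of `v` with respect to `γ`: the arithmetic mean of the
set of values `{wind(γ,u) : u ∈ N_v}`, each distinct value counted once. -/
noncomputable def topw (γ : LatticeCycle) (v : ℤ × ℤ) : ℚ :=
  (∑ k ∈ windSet γ v, (k : ℚ)) / ((windSet γ v).card : ℚ)

/-- The angle of `γ` at the vertex of index `i`: with `d_in = vᵢ - vᵢ₋₁` and
`d_out = vᵢ₊₁ - vᵢ`, it is `0` if `d_out = d_in`, `1/4` if `d_out` is `d_in`
rotated by 90° counterclockwise, `-1/4` if rotated by 90° clockwise. -/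
noncomputable def angleAt (γ : LatticeCycle) (i : ℕ) : ℚ :=
  let din := γ.v (i + γ.n) - γ.v (i + γ.n - 1)
  let dout := γ.v (i + 1) - γ.v i
  if dout = din then 0
  else if dout = (-din.2, din.1) then 1/4
  else if dout = (din.2, -din.1) then -1/4
  else 0

/-- `v` is a vertex of `γ`. -/
def LatticeCycle.isVertex (γ : LatticeCycle) (v : ℤ × ℤ) : Prop :=
  ∃ i, i < γ.n ∧ γ.v i = v

/-- The angle of `γ` at a point `v ∈ ℤ²`: the angle at the (unique) index of `v`
if `v` is a vertex of `γ`, and `0` otherwise. -/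
noncomputable def angle (γ : LatticeCycle) (v : ℤ × ℤ) : ℚ :=
  if h : γ.isVertex v then angleAt γ h.choose else 0

/-- The color of a lattice point: `1` if `x + y` is odd, `-1` if `x + y` is even. -/
def col (v : ℤ × ℤ) : ℤ := if Even (v.1 + v.2) then -1 else 1

/-- The enclosed charge `charge_int(γ) = Σ_{v ∈ ℤ², v ∉ image γ} col(v)·wind(γ,v)`. -/
noncomputable def chargeInt (γ : LatticeCycle) : ℤ :=
  ∑ᶠ v : ℤ × ℤ, if toR v ∉ γ.image then col v * wind γ (toR v) else 0

/-- The boundary charge `charge_∂(γ) = Σ_{v vertex of γ} angle(γ,v)·col(v)`. -/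
noncomputable def chargeBd (γ : LatticeCycle) : ℚ :=
  ∑ i ∈ Finset.range γ.n, angle γ (γ.v i) * (col (γ.v i) : ℚ)

set_option maxHeartbeats 1600000
set_option linter.all false

section Aux
variable (γ : LatticeCycle)

/-- half-integer point `(x+1/2, y+1/2)` -/
noncomputable def cp (x y : ℤ) : ℝ × ℝ := ((x : ℝ) + 1/2, (y : ℝ) + 1/2)

lemma half_lt_iff (a b : ℤ) : ((a : ℝ) + 1/2 < (b : ℝ)) ↔ a < b := by
  constructor
  · intro h
    by_contra h'
    push_neg at h'
    have : (b : ℝ) ≤ a := by exact_mod_cast h'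
    linarith
  · intro h
    have : (a : ℝ) + 1 ≤ b := by exact_mod_cast h
    linarith

lemma band_iff (a b : ℤ) : ((a : ℝ) ≤ (b : ℝ) + 1/2 ∧ (b : ℝ) + 1/2 < (a : ℝ) + 1) ↔ a = b := by
  constructor
  · rintro ⟨h1, h2⟩
    have g1 : a ≤ b := by
      by_contra h'
      push_neg at h'
      have : (b : ℝ) + 1 ≤ a := by exact_mod_cast h'
      linarith
    have g2 : b ≤ a := by
      by_contra h'
      push_neg at h'
      have : (a : ℝ) + 1 ≤ b := by exact_mod_cast h'
      linarith
    omega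
  · rintro rfl
    constructor <;> [linarith; linarith]

lemma vcross_cp (u w : ℤ × ℤ) (x y : ℤ) :
    vcross u w (cp x y) =
      if w = (u.1, u.2 + 1) ∧ x < u.1 ∧ u.2 = y then 1
      else if u = (w.1, w.2 + 1) ∧ x < w.1 ∧ w.2 = y then -1 else 0 := by
  have key : ∀ a b : ℤ × ℤ,
      (b = (a.1, a.2 + 1) ∧ (cp x y).1 < (a.1 : ℝ) ∧ (a.2 : ℝ) ≤ (cp x y).2 ∧ (cp x y).2 < (a.2 : ℝ) + 1)
      ↔ (b = (a.1, a.2 + 1) ∧ x < a.1 ∧ a.2 = y) := by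
    intro a b
    simp only [cp]
    constructor
    · rintro ⟨h, hx, hy1, hy2⟩
      exact ⟨h, (half_lt_iff x a.1).1 hx, (band_iff a.2 y).1 ⟨hy1, hy2⟩⟩
    · rintro ⟨h, hx, hy⟩
      exact ⟨h, (half_lt_iff x a.1).2 hx, ((band_iff a.2 y).2 hy).1, ((band_iff a.2 y).2 hy).2⟩
  rw [vcross, if_congr (key u w) rfl (if_congr (key w u) rfl rfl)]

/-- signed number of uses of the directed edge `s → t` (minus uses of `t → s`). -/
noncomputable def euse (x : LatticeCycle) (s t : ℤ × ℤ) : ℤ :=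
  ∑ i ∈ Finset.range x.n,
    (if x.v i = s ∧ x.v (i + 1) = t then 1 else if x.v i = t ∧ x.v (i + 1) = s then -1 else 0)

end Aux

lemma wind_sub_h (γ : LatticeCycle) (x y : ℤ) :
    wind γ (cp (x - 1) y) - wind γ (cp x y) = euse γ (x, y) (x, y + 1) := by
  rw [wind, wind, euse, ← Finset.sum_sub_distrib]
  refine Finset.sum_congr rfl fun i _ => ?_
  generalize γ.v i = u
  generalize γ.v (i + 1) = w
  obtain ⟨u1, u2⟩ := u
  obtain ⟨w1, w2⟩ := w
  rw [vcross_cp, vcross_cp]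
  simp only [Prod.mk.injEq]
  split_ifs <;> omega

lemma wind_sub_v (γ : LatticeCycle) (x y : ℤ) :
    wind γ (cp x (y - 1)) - wind γ (cp x y) = - euse γ (x, y) (x + 1, y) := by
  have hv0 : γ.v γ.n = γ.v 0 := by simpa using γ.periodic 0
  have tele : ∑ i ∈ Finset.range γ.n,
      ((if (γ.v (i + 1)).2 = y ∧ x < (γ.v (i + 1)).1 then (1 : ℤ) else 0)
        - (if (γ.v i).2 = y ∧ x < (γ.v i).1 then (1 : ℤ) else 0)) = 0 := by
    rw [Finset.sum_range_sub (f := fun i => if (γ.v i).2 = y ∧ x < (γ.v i).1 then (1 : ℤ) else 0),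
      hv0, sub_self]
  have key : ∀ i, vcross (γ.v i) (γ.v (i + 1)) (cp x (y - 1)) - vcross (γ.v i) (γ.v (i + 1)) (cp x y)
      + (if γ.v i = (x, y) ∧ γ.v (i + 1) = (x + 1, y) then (1 : ℤ)
          else if γ.v i = (x + 1, y) ∧ γ.v (i + 1) = (x, y) then -1 else 0)
      = (if (γ.v (i + 1)).2 = y ∧ x < (γ.v (i + 1)).1 then (1 : ℤ) else 0)
        - (if (γ.v i).2 = y ∧ x < (γ.v i).1 then 1 else 0) := by
    intro i
    have hst := γ.step i
    revert hst
    generalize γ.v i = u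
    generalize γ.v (i + 1) = w
    obtain ⟨u1, u2⟩ := u
    obtain ⟨w1, w2⟩ := w
    intro hst
    rw [vcross_cp, vcross_cp]
    simp only [Prod.mk.injEq, Prod.mk_sub_mk, Prod.ext_iff] at hst ⊢
    rcases hst with h | h | h | h <;> split_ifs <;> omega
  have main : (wind γ (cp x (y - 1)) - wind γ (cp x y)) + euse γ (x, y) (x + 1, y) = 0 := by
    rw [wind, wind, euse, ← Finset.sum_sub_distrib, ← Finset.sum_add_distrib,
      Finset.sum_congr rfl fun i _ => key i, tele]
  linarith

lemma hvn (γ : LatticeCycle) : γ.v γ.n = γ.v 0 := by simpa using γ.periodic 0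

lemma v_eq_cases (γ : LatticeCycle) {a b : ℕ} (ha : a ≤ γ.n) (hb : b ≤ γ.n)
    (h : γ.v a = γ.v b) : a = b ∨ (a = γ.n ∧ b = 0) ∨ (a = 0 ∧ b = γ.n) := by
  rcases eq_or_lt_of_le ha with rfl | ha'
  · rcases eq_or_lt_of_le hb with rfl | hb'
    · left; rfl
    · have := γ.inj 0 b (by have := γ.four_le; omega) hb' ((hvn γ).symm.trans h)
      right; left; omega
  · rcases eq_or_lt_of_le hb with rfl | hb'
    · have := γ.inj a 0 ha' (by have := γ.four_le; omega) (h.trans (hvn γ))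
      right; right; omega
    · left; exact γ.inj a b ha' hb' h

lemma pred_exists (γ : LatticeCycle) (i₀ : ℕ) (h : i₀ < γ.n) :
    ∃ i₁, i₁ < γ.n ∧ i₁ ≠ i₀ ∧ γ.v (i₁ + 1) = γ.v i₀ ∧ γ.v i₁ ≠ γ.v (i₀ + 1) := by
  have h4 := γ.four_le
  refine ⟨if i₀ = 0 then γ.n - 1 else i₀ - 1, by split_ifs <;> omega, by split_ifs <;> omega, ?_, ?_⟩
  · split_ifs with h0
    · rw [show γ.n - 1 + 1 = γ.n by omega, h0]; exact hvn γ
    · rw [show i₀ - 1 + 1 = i₀ by omega]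
  · intro hPQ
    have := v_eq_cases γ (a := if i₀ = 0 then γ.n - 1 else i₀ - 1) (b := i₀ + 1)
      (by split_ifs <;> omega) (by omega) hPQ
    split_ifs at this <;> omega

lemma euse_vertex (γ : LatticeCycle) (i₀ i₁ : ℕ) (h0 : i₀ < γ.n) (h1 : i₁ < γ.n)
    (hne : i₁ ≠ i₀) (hsucc : γ.v (i₁ + 1) = γ.v i₀) (s : ℤ × ℤ) (hs : s ≠ γ.v i₀) :
    euse γ (γ.v i₀) s =
      (if γ.v (i₀ + 1) = s then 1 else 0) - (if γ.v i₁ = s then 1 else 0) := by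
  rw [euse]
  have hsub : ({i₀, i₁} : Finset ℕ) ⊆ Finset.range γ.n := by
    intro i hi
    simp only [Finset.mem_insert, Finset.mem_singleton] at hi
    rcases hi with rfl | rfl <;> simp [h0, h1]
  have hzero : ∀ i ∈ Finset.range γ.n, i ∉ ({i₀, i₁} : Finset ℕ) →
      (if γ.v i = γ.v i₀ ∧ γ.v (i + 1) = s then (1 : ℤ)
        else if γ.v i = s ∧ γ.v (i + 1) = γ.v i₀ then -1 else 0) = 0 := by
    intro i hi hni
    simp only [Finset.mem_insert, Finset.mem_singleton, not_or] at hni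
    simp only [Finset.mem_range] at hi
    split_ifs with hA hB
    · exact absurd (γ.inj i i₀ hi h0 hA.1) hni.1
    · have := v_eq_cases γ (a := i + 1) (b := i₁ + 1) (by omega) (by omega)
        (hB.2.trans hsucc.symm)
      omega
    · rfl
  rw [← Finset.sum_subset hsub hzero, Finset.sum_pair (by omega : i₀ ≠ i₁)]
  have h2 : ¬(γ.v i₀ = s ∧ γ.v (i₀ + 1) = γ.v i₀) := fun hc => hs (hc.1.symm)
  have h3 : ¬(γ.v i₁ = γ.v i₀) := fun hc => hne (γ.inj i₁ i₀ h1 h0 hc)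
  simp only [hsucc, h3, eq_self_iff_true, true_and, and_true, false_and, if_false]
  split_ifs <;> first | omega | (exfalso; exact hs (by simp_all))

lemma euse_swap (γ : LatticeCycle) (s t : ℤ × ℤ) (h : s ≠ t) :
    euse γ t s = - euse γ s t := by
  rw [euse, euse, ← Finset.sum_neg_distrib]
  refine Finset.sum_congr rfl fun i _ => ?_
  revert h
  generalize γ.v i = u
  generalize γ.v (i + 1) = w
  obtain ⟨u1, u2⟩ := u; obtain ⟨w1, w2⟩ := w; obtain ⟨s1, s2⟩ := s; obtain ⟨t1, t2⟩ := t
  intro h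
  simp only [Prod.mk.injEq, ne_eq] at h ⊢
  split_ifs <;> omega

lemma windSet_eq (γ : LatticeCycle) (x y : ℤ) :
    windSet γ (x, y) = {wind γ (cp (x - 1) (y - 1)), wind γ (cp (x - 1) y),
      wind γ (cp x (y - 1)), wind γ (cp x y)} := by
  have c1 : corner (x, y) (-1) (-1) = cp (x - 1) (y - 1) := by
    simp only [corner, cp, Prod.mk.injEq]
    constructor <;> push_cast <;> ring
  have c2 : corner (x, y) (-1) 1 = cp (x - 1) y := by
    simp only [corner, cp, Prod.mk.injEq]
    constructor <;> push_cast <;> ring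
  have c3 : corner (x, y) 1 (-1) = cp x (y - 1) := by
    simp only [corner, cp, Prod.mk.injEq]
    constructor <;> push_cast <;> ring
  have c4 : corner (x, y) 1 1 = cp x y := by
    simp only [corner, cp, Prod.mk.injEq]
    constructor <;> push_cast <;> ring
  rw [windSet, c1, c2, c3, c4]

lemma struct (γ : LatticeCycle) (i₀ : ℕ) (h0 : i₀ < γ.n) :
    ∃ m : ℤ, windSet γ (γ.v i₀) = {m, m + 1} := by
  obtain ⟨i₁, h1, hne, hsucc, hPQ⟩ := pred_exists γ i₀ h0
  rcases hz : γ.v i₀ with ⟨x, y⟩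
  have hU : euse γ (x, y) (x, y + 1)
      = (if γ.v (i₀ + 1) = (x, y + 1) then (1 : ℤ) else 0)
        - (if γ.v i₁ = (x, y + 1) then 1 else 0) := by
    have := euse_vertex γ i₀ i₁ h0 h1 hne hsucc (x, y + 1)
      (by rw [hz]; simp only [ne_eq, Prod.mk.injEq]; omega)
    rw [hz] at this; exact this
  have hD : euse γ (x, y) (x, y - 1)
      = (if γ.v (i₀ + 1) = (x, y - 1) then (1 : ℤ) else 0)
        - (if γ.v i₁ = (x, y - 1) then 1 else 0) := by
    have := euse_vertex γ i₀ i₁ h0 h1 hne hsucc (x, y - 1)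
      (by rw [hz]; simp only [ne_eq, Prod.mk.injEq]; omega)
    rw [hz] at this; exact this
  have hR : euse γ (x, y) (x + 1, y)
      = (if γ.v (i₀ + 1) = (x + 1, y) then (1 : ℤ) else 0)
        - (if γ.v i₁ = (x + 1, y) then 1 else 0) := by
    have := euse_vertex γ i₀ i₁ h0 h1 hne hsucc (x + 1, y)
      (by rw [hz]; simp only [ne_eq, Prod.mk.injEq]; omega)
    rw [hz] at this; exact this
  have hL : euse γ (x, y) (x - 1, y)
      = (if γ.v (i₀ + 1) = (x - 1, y) then (1 : ℤ) else 0)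
        - (if γ.v i₁ = (x - 1, y) then 1 else 0) := by
    have := euse_vertex γ i₀ i₁ h0 h1 hne hsucc (x - 1, y)
      (by rw [hz]; simp only [ne_eq, Prod.mk.injEq]; omega)
    rw [hz] at this; exact this
  have E1 : wind γ (cp (x - 1) y) - wind γ (cp x y)
      = (if γ.v (i₀ + 1) = (x, y + 1) then (1 : ℤ) else 0)
        - (if γ.v i₁ = (x, y + 1) then 1 else 0) := by
    rw [wind_sub_h γ x y, hU]
  have E2 : wind γ (cp (x - 1) (y - 1)) - wind γ (cp x (y - 1))
      = -((if γ.v (i₀ + 1) = (x, y - 1) then (1 : ℤ) else 0)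
        - (if γ.v i₁ = (x, y - 1) then 1 else 0)) := by
    have h := wind_sub_h γ x (y - 1)
    rw [show y - 1 + 1 = y from by ring] at h
    rw [h, euse_swap γ (x, y) (x, y - 1)
      (by simp only [ne_eq, Prod.mk.injEq]; omega), hD]
  have E3 : wind γ (cp x (y - 1)) - wind γ (cp x y)
      = -((if γ.v (i₀ + 1) = (x + 1, y) then (1 : ℤ) else 0)
        - (if γ.v i₁ = (x + 1, y) then 1 else 0)) := by
    rw [wind_sub_v γ x y, hR]
  have E4 : wind γ (cp (x - 1) (y - 1)) - wind γ (cp (x - 1) y)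
      = (if γ.v (i₀ + 1) = (x - 1, y) then (1 : ℤ) else 0)
        - (if γ.v i₁ = (x - 1, y) then 1 else 0) := by
    have h := wind_sub_v γ (x - 1) y
    rw [show x - 1 + 1 = x from by ring] at h
    rw [h, euse_swap γ (x, y) (x - 1, y)
      (by simp only [ne_eq, Prod.mk.injEq]; omega), hL]
    ring
  have hQ := γ.step i₀
  have hP := γ.step i₁
  rw [hsucc, hz] at hP
  rw [hz] at hQ
  rcases hw : γ.v (i₀ + 1) with ⟨qx, qy⟩
  rcases hp : γ.v i₁ with ⟨px, py⟩
  rw [hw, hp] at hPQ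
  simp only [hw, hp, Prod.mk.injEq, Prod.mk_sub_mk, ne_eq, not_and] at hQ hP hPQ E1 E2 E3 E4
  set tQU := (if qx = x ∧ qy = y + 1 then (1:ℤ) else 0) with dQU
  set tQD := (if qx = x ∧ qy = y - 1 then (1:ℤ) else 0) with dQD
  set tQR := (if qx = x + 1 ∧ qy = y then (1:ℤ) else 0) with dQR
  set tQL := (if qx = x - 1 ∧ qy = y then (1:ℤ) else 0) with dQL
  set tPU := (if px = x ∧ py = y + 1 then (1:ℤ) else 0) with dPU
  set tPD := (if px = x ∧ py = y - 1 then (1:ℤ) else 0) with dPD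
  set tPR := (if px = x + 1 ∧ py = y then (1:ℤ) else 0) with dPR
  set tPL := (if px = x - 1 ∧ py = y then (1:ℤ) else 0) with dPL
  have bQU : 0 ≤ tQU ∧ tQU ≤ 1 := by rw [dQU]; split_ifs <;> omega
  have bQD : 0 ≤ tQD ∧ tQD ≤ 1 := by rw [dQD]; split_ifs <;> omega
  have bQR : 0 ≤ tQR ∧ tQR ≤ 1 := by rw [dQR]; split_ifs <;> omega
  have bQL : 0 ≤ tQL ∧ tQL ≤ 1 := by rw [dQL]; split_ifs <;> omega
  have bPU : 0 ≤ tPU ∧ tPU ≤ 1 := by rw [dPU]; split_ifs <;> omega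
  have bPD : 0 ≤ tPD ∧ tPD ≤ 1 := by rw [dPD]; split_ifs <;> omega
  have bPR : 0 ≤ tPR ∧ tPR ≤ 1 := by rw [dPR]; split_ifs <;> omega
  have bPL : 0 ≤ tPL ∧ tPL ≤ 1 := by rw [dPL]; split_ifs <;> omega
  have gQ : tQU + tQD + tQR + tQL = 1 := by
    rw [dQU, dQD, dQR, dQL]
    rcases hQ with h | h | h | h <;> split_ifs <;> omega
  have gP : tPU + tPD + tPR + tPL = 1 := by
    rw [dPU, dPD, dPR, dPL]
    rcases hP with h | h | h | h <;> split_ifs <;> omega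
  have m1 : tQU + tPU ≤ 1 := by rw [dQU, dPU]; split_ifs <;> omega
  have m2 : tQD + tPD ≤ 1 := by rw [dQD, dPD]; split_ifs <;> omega
  have m3 : tQR + tPR ≤ 1 := by rw [dQR, dPR]; split_ifs <;> omega
  have m4 : tQL + tPL ≤ 1 := by rw [dQL, dPL]; split_ifs <;> omega
  rw [windSet_eq]
  have key : ∃ m : ℤ, (wind γ (cp (x - 1) (y - 1)) = m ∨ wind γ (cp (x - 1) (y - 1)) = m + 1)
      ∧ (wind γ (cp (x - 1) y) = m ∨ wind γ (cp (x - 1) y) = m + 1)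
      ∧ (wind γ (cp x (y - 1)) = m ∨ wind γ (cp x (y - 1)) = m + 1)
      ∧ (wind γ (cp x y) = m ∨ wind γ (cp x y) = m + 1)
      ∧ (wind γ (cp (x - 1) (y - 1)) = m ∨ wind γ (cp (x - 1) y) = m
          ∨ wind γ (cp x (y - 1)) = m ∨ wind γ (cp x y) = m)
      ∧ (wind γ (cp (x - 1) (y - 1)) = m + 1 ∨ wind γ (cp (x - 1) y) = m + 1
          ∨ wind γ (cp x (y - 1)) = m + 1 ∨ wind γ (cp x y) = m + 1) := by
    refine ⟨min (min (wind γ (cp (x - 1) (y - 1))) (wind γ (cp (x - 1) y)))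
      (min (wind γ (cp x (y - 1))) (wind γ (cp x y))), ?_⟩
    omega
  obtain ⟨m, k1, k2, k3, k4, k5, k6⟩ := key
  refine ⟨m, ?_⟩
  ext t
  simp only [Finset.mem_insert, Finset.mem_singleton]
  omega

lemma mem_pair {t m : ℤ} (h : t ∈ ({m, m + 1} : Finset ℤ)) : t = m ∨ t = m + 1 := by
  simpa using h

lemma topw_succ (γ : LatticeCycle) (i₀ : ℕ) (h0 : i₀ < γ.n) :
    topw γ (γ.v i₀) = topw γ (γ.v (i₀ + 1)) := by
  have h4 := γ.four_le
  have hjn : (if i₀ + 1 = γ.n then 0 else i₀ + 1) < γ.n := by split_ifs <;> omega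
  have hvj : γ.v (if i₀ + 1 = γ.n then 0 else i₀ + 1) = γ.v (i₀ + 1) := by
    split_ifs with hh
    · rw [hh]; exact (hvn γ).symm
    · rfl
  obtain ⟨m2, hm2⟩ := struct γ _ hjn
  rw [hvj] at hm2
  obtain ⟨i₁, h1, hne, hsucc, hPQ⟩ := pred_exists γ i₀ h0
  rcases hz : γ.v i₀ with ⟨x, y⟩
  obtain ⟨m1, hm1⟩ := struct γ i₀ h0
  rw [hz, windSet_eq] at hm1
  have step0 := γ.step i₀
  rw [hz] at step0
  suffices hmm : m1 = m2 by
    rw [topw, topw, windSet_eq, hm1, hm2, hmm]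
  rcases step0 with h | h | h | h
  · -- right : Q = (x+1, y), shared corners cp x (y-1), cp x y
    have hv : γ.v (i₀ + 1) = (x + 1, y) := by
      rw [sub_eq_iff_eq_add.mp h]; simp only [Prod.mk_add_mk, Prod.mk.injEq]; omega
    have hE := euse_vertex γ i₀ i₁ h0 h1 hne hsucc (x + 1, y)
      (by rw [hz]; simp only [ne_eq, Prod.mk.injEq]; omega)
    rw [hz] at hE
    have hdiff : wind γ (cp x (y - 1)) - wind γ (cp x y) = -1 := by
      rw [wind_sub_v γ x y, hE, if_pos hv, if_neg (hv ▸ hPQ)]; norm_num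
    rw [hv, windSet_eq, show x + 1 - 1 = x from by ring] at hm2
    have k1 := mem_pair (show wind γ (cp x (y - 1)) ∈ ({m1, m1 + 1} : Finset ℤ) by
      rw [← hm1]; simp)
    have k2 := mem_pair (show wind γ (cp x y) ∈ ({m1, m1 + 1} : Finset ℤ) by
      rw [← hm1]; simp)
    have k3 := mem_pair (show wind γ (cp x (y - 1)) ∈ ({m2, m2 + 1} : Finset ℤ) by
      rw [← hm2]; simp)
    have k4 := mem_pair (show wind γ (cp x y) ∈ ({m2, m2 + 1} : Finset ℤ) by
      rw [← hm2]; simp)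
    omega
  · -- left : Q = (x-1, y), shared corners cp (x-1) (y-1), cp (x-1) y
    have hv : γ.v (i₀ + 1) = (x - 1, y) := by
      rw [sub_eq_iff_eq_add.mp h]; simp only [Prod.mk_add_mk, Prod.mk.injEq]; omega
    have hE := euse_vertex γ i₀ i₁ h0 h1 hne hsucc (x - 1, y)
      (by rw [hz]; simp only [ne_eq, Prod.mk.injEq]; omega)
    rw [hz] at hE
    have hdiff : wind γ (cp (x - 1) (y - 1)) - wind γ (cp (x - 1) y) = 1 := by
      have h' := wind_sub_v γ (x - 1) y
      rw [show x - 1 + 1 = x from by ring] at h'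
      rw [euse_swap γ (x, y) (x - 1, y)
        (by simp only [ne_eq, Prod.mk.injEq]; omega)] at h'
      rw [h', hE, if_pos hv, if_neg (hv ▸ hPQ)]; norm_num
    rw [hv, windSet_eq] at hm2
    have k1 := mem_pair (show wind γ (cp (x - 1) (y - 1)) ∈ ({m1, m1 + 1} : Finset ℤ) by
      rw [← hm1]; simp)
    have k2 := mem_pair (show wind γ (cp (x - 1) y) ∈ ({m1, m1 + 1} : Finset ℤ) by
      rw [← hm1]; simp)
    have k3 := mem_pair (show wind γ (cp (x - 1) (y - 1)) ∈ ({m2, m2 + 1} : Finset ℤ) by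
      rw [← hm2]; simp)
    have k4 := mem_pair (show wind γ (cp (x - 1) y) ∈ ({m2, m2 + 1} : Finset ℤ) by
      rw [← hm2]; simp)
    omega
  · -- up : Q = (x, y+1), shared corners cp (x-1) y, cp x y
    have hv : γ.v (i₀ + 1) = (x, y + 1) := by
      rw [sub_eq_iff_eq_add.mp h]; simp only [Prod.mk_add_mk, Prod.mk.injEq]; omega
    have hE := euse_vertex γ i₀ i₁ h0 h1 hne hsucc (x, y + 1)
      (by rw [hz]; simp only [ne_eq, Prod.mk.injEq]; omega)
    rw [hz] at hE
    have hdiff : wind γ (cp (x - 1) y) - wind γ (cp x y) = 1 := by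
      rw [wind_sub_h γ x y, hE, if_pos hv, if_neg (hv ▸ hPQ)]; norm_num
    rw [hv, windSet_eq, show y + 1 - 1 = y from by ring] at hm2
    have k1 := mem_pair (show wind γ (cp (x - 1) y) ∈ ({m1, m1 + 1} : Finset ℤ) by
      rw [← hm1]; simp)
    have k2 := mem_pair (show wind γ (cp x y) ∈ ({m1, m1 + 1} : Finset ℤ) by
      rw [← hm1]; simp)
    have k3 := mem_pair (show wind γ (cp (x - 1) y) ∈ ({m2, m2 + 1} : Finset ℤ) by
      rw [← hm2]; simp)
    have k4 := mem_pair (show wind γ (cp x y) ∈ ({m2, m2 + 1} : Finset ℤ) by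
      rw [← hm2]; simp)
    omega
  · -- down : Q = (x, y-1), shared corners cp (x-1) (y-1), cp x (y-1)
    have hv : γ.v (i₀ + 1) = (x, y - 1) := by
      rw [sub_eq_iff_eq_add.mp h]; simp only [Prod.mk_add_mk, Prod.mk.injEq]; omega
    have hE := euse_vertex γ i₀ i₁ h0 h1 hne hsucc (x, y - 1)
      (by rw [hz]; simp only [ne_eq, Prod.mk.injEq]; omega)
    rw [hz] at hE
    have hdiff : wind γ (cp (x - 1) (y - 1)) - wind γ (cp x (y - 1)) = -1 := by
      have h' := wind_sub_h γ x (y - 1)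
      rw [show y - 1 + 1 = y from by ring] at h'
      rw [euse_swap γ (x, y) (x, y - 1)
        (by simp only [ne_eq, Prod.mk.injEq]; omega)] at h'
      rw [h', hE, if_pos hv, if_neg (hv ▸ hPQ)]; norm_num
    rw [hv, windSet_eq] at hm2
    have k1 := mem_pair (show wind γ (cp (x - 1) (y - 1)) ∈ ({m1, m1 + 1} : Finset ℤ) by
      rw [← hm1]; simp)
    have k2 := mem_pair (show wind γ (cp x (y - 1)) ∈ ({m1, m1 + 1} : Finset ℤ) by
      rw [← hm1]; simp)
    have k3 := mem_pair (show wind γ (cp (x - 1) (y - 1)) ∈ ({m2, m2 + 1} : Finset ℤ) by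
      rw [← hm2]; simp)
    have k4 := mem_pair (show wind γ (cp x (y - 1)) ∈ ({m2, m2 + 1} : Finset ℤ) by
      rw [← hm2]; simp)
    omega

lemma topw_idx (γ : LatticeCycle) (i : ℕ) (h : i ≤ γ.n) : topw γ (γ.v i) = topw γ (γ.v 0) := by
  induction i with
  | zero => rfl
  | succ k ih =>
    rw [← topw_succ γ k (by omega)]
    exact ih (by omega)

lemma col_step (γ : LatticeCycle) (i : ℕ) : col (γ.v (i + 1)) = - col (γ.v i) := by
  have h := γ.step i
  revert h
  generalize γ.v i = u
  generalize γ.v (i + 1) = w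
  obtain ⟨u1, u2⟩ := u; obtain ⟨w1, w2⟩ := w
  intro h
  simp only [Prod.mk_sub_mk, Prod.mk.injEq] at h
  simp only [col, Int.even_iff]
  rcases h with h | h | h | h <;> split_ifs <;> omega

lemma col_pow (γ : LatticeCycle) (i : ℕ) : col (γ.v i) = (-1) ^ i * col (γ.v 0) := by
  induction i with
  | zero => simp
  | succ k ih => rw [col_step, ih, pow_succ]; ring

lemma n_even (γ : LatticeCycle) : Even γ.n := by
  have h1 : col (γ.v γ.n) = col (γ.v 0) := by rw [hvn]
  rw [col_pow γ γ.n] at h1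
  have hc : col (γ.v 0) = 1 ∨ col (γ.v 0) = -1 := by
    rw [col]; split_ifs <;> simp
  rcases Nat.even_or_odd γ.n with he | ho
  · exact he
  · rw [ho.neg_one_pow] at h1
    omega

theorem sum_col_topw_vertices_eq_zero_aux (γ : LatticeCycle) :
    ∑ i ∈ Finset.range γ.n, (col (γ.v i) : ℚ) * topw γ (γ.v i) = 0 := by
  have hT : ∀ i ∈ Finset.range γ.n, (col (γ.v i) : ℚ) * topw γ (γ.v i)
      = (col (γ.v i) : ℚ) * topw γ (γ.v 0) := by
    intro i hi
    simp only [Finset.mem_range] at hi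
    rw [topw_idx γ i (by omega)]
  rw [Finset.sum_congr rfl hT, ← Finset.sum_mul]
  have hz : ∑ i ∈ Finset.range γ.n, (col (γ.v i) : ℚ) = 0 := by
    have : ∑ i ∈ Finset.range γ.n, col (γ.v i) = 0 := by
      have : ∑ i ∈ Finset.range γ.n, col (γ.v i)
          = (∑ i ∈ Finset.range γ.n, (-1 : ℤ) ^ i) * col (γ.v 0) := by
        rw [Finset.sum_mul]
        exact Finset.sum_congr rfl fun i _ => col_pow γ i
      rw [this, neg_one_geom_sum, if_pos (n_even γ), zero_mul]
    calc ∑ i ∈ Finset.range γ.n, (col (γ.v i) : ℚ)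
        = ((∑ i ∈ Finset.range γ.n, col (γ.v i) : ℤ) : ℚ) := by push_cast; ring
      _ = 0 := by rw [this]; norm_num
  rw [hz, zero_mul]

/-- The sum of `col(v)·topw(γ,v)` over the vertices of `γ` is `0`. -/
theorem sum_col_topw_vertices_eq_zero (γ : LatticeCycle) :
    ∑ i ∈ Finset.range γ.n, (col (γ.v i) : ℚ) * topw γ (γ.v i) = 0 := by
  exact sum_col_topw_vertices_eq_zero_aux γ
end

section
/- (Lemma 3.1 of the paper.) Let γ be an oriented simple lattice cycle. Then charge_int(γ) = Σ_{v ∈ ℤ²} col(v)·topw(γ,v), where the right-hand sum has only finitely many nonzero terms. -/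
open scoped Classical

namespace ChargeProof

noncomputable def Wf (γ : LatticeCycle) (z : ℤ × ℤ) : ℤ := wind γ (toR z)

noncomputable def cnt (γ : LatticeCycle) (p q : ℤ × ℤ) : ℤ :=
  ∑ i ∈ Finset.range γ.n, if γ.v i = p ∧ γ.v (i+1) = q then 1 else 0

lemma vcross_eq (u w : ℤ × ℤ) (p : ℝ × ℝ) :
    vcross u w p =
      (if w = (u.1, u.2 + 1) ∧ p.1 < (u.1 : ℝ) ∧ (u.2 : ℝ) ≤ p.2 ∧ p.2 < (u.2 : ℝ) + 1 then 1 else 0)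
      - (if u = (w.1, w.2 + 1) ∧ p.1 < (w.1 : ℝ) ∧ (w.2 : ℝ) ≤ p.2 ∧ p.2 < (w.2 : ℝ) + 1 then 1 else 0) := by
  unfold vcross
  by_cases h1 : w = (u.1, u.2 + 1) ∧ p.1 < (u.1 : ℝ) ∧ (u.2 : ℝ) ≤ p.2 ∧ p.2 < (u.2 : ℝ) + 1
  · have h2 : ¬ (u = (w.1, w.2 + 1) ∧ p.1 < (w.1 : ℝ) ∧ (w.2 : ℝ) ≤ p.2 ∧ p.2 < (w.2 : ℝ) + 1) := by
      rintro ⟨hu, -⟩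
      have := h1.1
      rw [hu] at this
      have : w.2 = w.2 + 1 + 1 := by
        have := congrArg Prod.snd this; simpa using this
      omega
    rw [if_pos h1, if_pos h1, if_neg h2]; ring
  · rw [if_neg h1, if_neg h1]; split_ifs <;> ring

lemma vcross_toR (u w z : ℤ × ℤ) :
    vcross u w (toR z) =
      (if w = (u.1, u.2 + 1) ∧ z.1 < u.1 ∧ u.2 = z.2 then 1 else 0)
      - (if u = (w.1, w.2 + 1) ∧ z.1 < w.1 ∧ w.2 = z.2 then 1 else 0) := by
  rw [vcross_eq]
  have key : ∀ a b : ℤ, ((z.1 : ℝ) < (a : ℝ) ∧ (b : ℝ) ≤ (z.2 : ℝ) ∧ (z.2 : ℝ) < (b : ℝ) + 1)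
      ↔ (z.1 < a ∧ b = z.2) := by
    intro a b
    constructor
    · rintro ⟨h1, h2, h3⟩
      refine ⟨by exact_mod_cast h1, ?_⟩
      have h2' : b ≤ z.2 := by exact_mod_cast h2
      have h3' : (z.2 : ℝ) < ((b + 1 : ℤ) : ℝ) := by push_cast; linarith
      have : z.2 < b + 1 := by exact_mod_cast h3'
      omega
    · rintro ⟨h1, h2⟩
      subst h2
      refine ⟨by exact_mod_cast h1, le_refl _, by linarith⟩
  have hA := and_congr_right (fun _ : w = (u.1, u.2+1) => key u.1 u.2)
  have hB := and_congr_right (fun _ : u = (w.1, w.2+1) => key w.1 w.2)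
  simp only [toR] at *
  simp only [hA, hB]

lemma vcross_corner (u w z : ℤ × ℤ) :
    vcross u w (corner z 1 1) = vcross u w (toR z) := by
  rw [vcross_eq, vcross_eq]
  have key : ∀ a b : ℤ, (((z.1 : ℝ) + (1:ℤ)/2 < (a : ℝ)) ∧ (b : ℝ) ≤ (z.2 : ℝ) + (1:ℤ)/2 ∧ (z.2 : ℝ) + (1:ℤ)/2 < (b : ℝ) + 1)
      ↔ ((z.1 : ℝ) < (a : ℝ) ∧ (b : ℝ) ≤ (z.2 : ℝ) ∧ (z.2 : ℝ) < (b : ℝ) + 1) := by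
    intro a b
    constructor
    · rintro ⟨h1, h2, h3⟩
      have e1 : (z.1 : ℝ) < a := by linarith [show ((1:ℤ):ℝ)/2 = 1/2 by norm_num]
      have i2 : (b : ℝ) < (z.2 : ℝ) + 1 := by push_cast at h2 ⊢; linarith
      have i3 : (z.2 : ℝ) < (b : ℝ) + 1 := by push_cast at h3 ⊢; linarith
      have b2 : b < z.2 + 1 := by exact_mod_cast (by push_cast at i2 ⊢; linarith : (b:ℝ) < ((z.2 + 1 : ℤ):ℝ))
      have b3 : z.2 < b + 1 := by exact_mod_cast (by push_cast at i3 ⊢; linarith : (z.2:ℝ) < ((b + 1 : ℤ):ℝ))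
      have : b = z.2 := by omega
      subst this
      exact ⟨e1, le_refl _, by linarith⟩
    · rintro ⟨h1, h2, h3⟩
      have hb : b ≤ z.2 := by exact_mod_cast h2
      have hb2 : z.2 < b + 1 := by exact_mod_cast (by push_cast; linarith : (z.2:ℝ) < ((b+1:ℤ):ℝ))
      have : b = z.2 := by omega
      subst this
      have h1' : z.1 < a := by exact_mod_cast h1
      have h1'' : z.1 + 1 ≤ a := by omega
      have : ((z.1 + 1 : ℤ) : ℝ) ≤ a := by exact_mod_cast h1''
      push_cast at this ⊢
      constructor
      · linarith
      constructor
      · linarith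
      · linarith
  have hA := and_congr_right (fun _ : w = (u.1, u.2+1) => key u.1 u.2)
  have hB := and_congr_right (fun _ : u = (w.1, w.2+1) => key w.1 w.2)
  simp only [corner, toR] at *
  simp only [hA, hB]
  rfl

end ChargeProof
namespace ChargeProof

lemma wind_corner11 (γ : LatticeCycle) (z : ℤ × ℤ) :
    wind γ (corner z 1 1) = Wf γ z := by
  unfold wind Wf wind
  exact Finset.sum_congr rfl (fun i _ => vcross_corner _ _ _)

lemma corner_shift1 (z : ℤ × ℤ) : corner z (-1) 1 = corner (z - (1,0)) 1 1 := by
  unfold corner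
  simp only [Prod.fst_sub, Prod.snd_sub]
  push_cast
  rw [Prod.mk.injEq]
  constructor <;> ring

lemma corner_shift2 (z : ℤ × ℤ) : corner z 1 (-1) = corner (z - (0,1)) 1 1 := by
  unfold corner
  simp only [Prod.fst_sub, Prod.snd_sub]
  push_cast
  rw [Prod.mk.injEq]
  constructor <;> ring

lemma corner_shift3 (z : ℤ × ℤ) : corner z (-1) (-1) = corner (z - (1,1)) 1 1 := by
  unfold corner
  simp only [Prod.fst_sub, Prod.snd_sub]
  push_cast
  rw [Prod.mk.injEq]
  constructor <;> ring

lemma windSet_eq (γ : LatticeCycle) (z : ℤ × ℤ) :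
    windSet γ z = {Wf γ (z - (1,1)), Wf γ (z - (1,0)), Wf γ (z - (0,1)), Wf γ z} := by
  unfold windSet
  rw [corner_shift1, corner_shift2, corner_shift3,
    wind_corner11, wind_corner11, wind_corner11, wind_corner11]

lemma sum_tele (γ : LatticeCycle) (φ : ℤ × ℤ → ℤ) :
    ∑ i ∈ Finset.range γ.n, (φ (γ.v (i+1)) - φ (γ.v i)) = 0 := by
  rw [Finset.sum_range_sub (fun i => φ (γ.v i))]
  rw [show γ.n = 0 + γ.n by omega, γ.periodic 0]
  ring

lemma L1 (γ : LatticeCycle) (z : ℤ × ℤ) :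
    Wf γ (z - (1,0)) = Wf γ z + cnt γ z (z + (0,1)) - cnt γ (z + (0,1)) z := by
  unfold Wf wind cnt
  rw [← Finset.sum_add_distrib, ← Finset.sum_sub_distrib]
  refine Finset.sum_congr rfl (fun i _ => ?_)
  rw [vcross_toR, vcross_toR]
  have hz1 : (z - (1,0)).1 = z.1 - 1 := rfl
  have hz2 : (z - (1,0)).2 = z.2 := by simp
  rw [hz1, hz2]
  simp only [Prod.ext_iff, Prod.fst_add, Prod.snd_add]
  split_ifs <;> omega

set_option maxHeartbeats 1000000 in
lemma L2 (γ : LatticeCycle) (z : ℤ × ℤ) :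
    Wf γ (z - (0,1)) = Wf γ z - (cnt γ z (z + (1,0)) - cnt γ (z + (1,0)) z) := by
  have key : ∀ i, vcross (γ.v i) (γ.v (i+1)) (toR (z - (0,1)))
      - vcross (γ.v i) (γ.v (i+1)) (toR z)
      + ((if γ.v i = z ∧ γ.v (i+1) = z + (1,0) then (1:ℤ) else 0)
        - (if γ.v i = z + (1,0) ∧ γ.v (i+1) = z then 1 else 0))
      = (fun q : ℤ × ℤ => if z.1 < q.1 ∧ q.2 = z.2 then (1:ℤ) else 0) (γ.v (i+1))
        - (fun q : ℤ × ℤ => if z.1 < q.1 ∧ q.2 = z.2 then (1:ℤ) else 0) (γ.v i) := by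
    intro i
    have h12 : ∀ d : ℤ × ℤ, γ.v (i+1) - γ.v i = d →
        (γ.v (i+1)).1 = (γ.v i).1 + d.1 ∧ (γ.v (i+1)).2 = (γ.v i).2 + d.2 := by
      intro d hd
      constructor
      · have := congrArg Prod.fst hd; simp at this; omega
      · have := congrArg Prod.snd hd; simp at this; omega
    rw [vcross_toR, vcross_toR]
    have hz1 : (z - (0,1)).1 = z.1 := by simp
    have hz2 : (z - (0,1)).2 = z.2 - 1 := rfl
    rw [hz1, hz2]
    simp only
    rcases γ.step i with h | h | h | h <;>
      obtain ⟨e1, e2⟩ := h12 _ h <;>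
      · simp only [Prod.ext_iff, Prod.fst_add, Prod.snd_add] at *
        split_ifs <;> omega
  have hsum := Finset.sum_congr rfl (fun i (_ : i ∈ Finset.range γ.n) => key i)
  rw [Finset.sum_add_distrib, Finset.sum_sub_distrib, Finset.sum_sub_distrib] at hsum
  rw [sum_tele γ (fun q : ℤ × ℤ => if z.1 < q.1 ∧ q.2 = z.2 then (1:ℤ) else 0)] at hsum
  unfold Wf wind cnt
  omega

end ChargeProof
namespace ChargeProof

lemma v_prev_eq (γ : LatticeCycle) (i : ℕ) (hi : i < γ.n) :
    γ.v ((if i = 0 then γ.n - 1 else i - 1) + 1) = γ.v i ∧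
    γ.v (if i = 0 then γ.n - 1 else i - 1) = γ.v (i + γ.n - 1) := by
  have hn := γ.four_le
  by_cases h0 : i = 0
  · subst h0
    simp only [eq_self_iff_true, if_true]
    constructor
    · rw [show γ.n - 1 + 1 = 0 + γ.n by omega, γ.periodic]
    · rw [show 0 + γ.n - 1 = γ.n - 1 by omega]
  · simp only [if_neg h0]
    constructor
    · rw [show i - 1 + 1 = i by omega]
    · rw [show i + γ.n - 1 = (i - 1) + γ.n by omega, γ.periodic]

lemma cnt_from_vertex (γ : LatticeCycle) (i : ℕ) (hi : i < γ.n) (q : ℤ × ℤ) :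
    cnt γ (γ.v i) q = if γ.v (i+1) = q then 1 else 0 := by
  unfold cnt
  rw [Finset.sum_eq_single_of_mem i (Finset.mem_range.mpr hi)]
  · simp
  · intro j hj hne
    rw [if_neg]
    rintro ⟨h1, -⟩
    exact hne (γ.inj j i (Finset.mem_range.mp hj) hi h1)

lemma cnt_to_vertex (γ : LatticeCycle) (i : ℕ) (hi : i < γ.n) (q : ℤ × ℤ) :
    cnt γ q (γ.v i) = if γ.v (i + γ.n - 1) = q then 1 else 0 := by
  have hn := γ.four_le
  obtain ⟨hp1, hp2⟩ := v_prev_eq γ i hi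
  set j0 := if i = 0 then γ.n - 1 else i - 1 with hj0
  have hj0n : j0 < γ.n := by rw [hj0]; split <;> omega
  unfold cnt
  rw [Finset.sum_eq_single_of_mem j0 (Finset.mem_range.mpr hj0n)]
  · rw [hp1]
    by_cases h : γ.v j0 = q
    · rw [if_pos ⟨h, rfl⟩, if_pos (by rw [← hp2]; exact h)]
    · rw [if_neg (by rintro ⟨h1, -⟩; exact h h1),
        if_neg (by rw [← hp2]; exact h)]
  · intro j hj hne
    rw [if_neg]
    rintro ⟨-, h2⟩
    have hjn := Finset.mem_range.mp hj
    apply hne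
    by_cases hj1 : j + 1 < γ.n
    · have := γ.inj (j+1) i hj1 hi h2
      rw [hj0]
      split <;> omega
    · have hjeq : j = γ.n - 1 := by omega
      have : γ.v (j + 1) = γ.v 0 := by
        rw [show j + 1 = 0 + γ.n by omega, γ.periodic]
      rw [this] at h2
      have := γ.inj 0 i (by omega) hi h2
      rw [hj0]
      split <;> omega

lemma cnt_from_nonvertex (γ : LatticeCycle) (z : ℤ × ℤ) (h : ¬ γ.isVertex z) (q : ℤ × ℤ) :
    cnt γ z q = 0 := by
  unfold cnt
  apply Finset.sum_eq_zero
  intro j hj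
  rw [if_neg]
  rintro ⟨h1, -⟩
  exact h ⟨j, Finset.mem_range.mp hj, h1⟩

lemma cnt_to_nonvertex (γ : LatticeCycle) (z : ℤ × ℤ) (h : ¬ γ.isVertex z) (q : ℤ × ℤ) :
    cnt γ q z = 0 := by
  have hn := γ.four_le
  unfold cnt
  apply Finset.sum_eq_zero
  intro j hj
  have hjn := Finset.mem_range.mp hj
  rw [if_neg]
  rintro ⟨-, h2⟩
  by_cases hj1 : j + 1 < γ.n
  · exact h ⟨j+1, hj1, h2⟩
  · have : γ.v (j + 1) = γ.v 0 := by
      rw [show j + 1 = 0 + γ.n by omega, γ.periodic]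
    rw [this] at h2
    exact h ⟨0, by omega, h2⟩

lemma topw_eq_single (γ : LatticeCycle) (z : ℤ × ℤ) (m : ℤ)
    (h : windSet γ z = {m}) : topw γ z = (m : ℚ) := by
  unfold topw
  rw [h]
  simp

lemma topw_eq_pair (γ : LatticeCycle) (z : ℤ × ℤ) (m1 m2 : ℤ) (hne : m1 ≠ m2)
    (h : windSet γ z = {m1, m2}) : topw γ z = ((m1 : ℚ) + m2) / 2 := by
  unfold topw
  rw [h, Finset.sum_pair hne, Finset.card_pair hne]
  push_cast
  ring

end ChargeProof
namespace ChargeProof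

lemma prodarith1 (z : ℤ × ℤ) : (z - (0,1)) - (1,0) = z - (1,1) := by
  rw [Prod.ext_iff]; constructor <;> simp

lemma prodarith2 (z : ℤ × ℤ) : (z - (0,1)) + (0,1) = z := by
  rw [Prod.ext_iff]; constructor <;> simp

lemma topw_nonvertex (γ : LatticeCycle) (z : ℤ × ℤ) (h : ¬ γ.isVertex z) :
    topw γ z = (Wf γ z : ℚ) := by
  have hz' : ¬ γ.isVertex (z - (0,1)) ∨ True := Or.inr trivial
  have c1 : Wf γ (z - (1,0)) = Wf γ z := by
    rw [L1, cnt_from_nonvertex γ z h, cnt_to_nonvertex γ z h]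
    ring
  have c2 : Wf γ (z - (0,1)) = Wf γ z := by
    rw [L2, cnt_from_nonvertex γ z h, cnt_to_nonvertex γ z h]
    ring
  have c3 : Wf γ (z - (1,1)) = Wf γ z := by
    have := L1 γ (z - (0,1))
    rw [prodarith1, prodarith2] at this
    rw [this, c2, cnt_from_nonvertex γ z h, cnt_to_nonvertex γ z h]
    ring
  apply topw_eq_single
  rw [windSet_eq, c1, c2, c3]
  simp

end ChargeProof
namespace ChargeProof

noncomputable def msq (γ : LatticeCycle) (p q : ℤ × ℤ) : ℚ :=
  if q = p + (0,1) then (((Wf γ (p - (1,0)) : ℤ) : ℚ) + ((Wf γ p : ℤ) : ℚ))/2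
  else if q = p + (0,-1) then (((Wf γ (q - (1,0)) : ℤ) : ℚ) + ((Wf γ q : ℤ) : ℚ))/2
  else if q = p + (1,0) then (((Wf γ (p - (0,1)) : ℤ) : ℚ) + ((Wf γ p : ℤ) : ℚ))/2
  else if q = p + (-1,0) then (((Wf γ (q - (0,1)) : ℤ) : ℚ) + ((Wf γ q : ℤ) : ℚ))/2
  else 0

set_option maxHeartbeats 2000000 in
lemma topw_vertex (γ : LatticeCycle) (z nxt prv : ℤ × ℤ)
    (hne : nxt ≠ prv)
    (ha : nxt = z + (1,0) ∨ nxt = z + (-1,0) ∨ nxt = z + (0,1) ∨ nxt = z + (0,-1))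
    (hb : prv = z + (1,0) ∨ prv = z + (-1,0) ∨ prv = z + (0,1) ∨ prv = z + (0,-1))
    (hNW : Wf γ (z - (1,0)) = Wf γ z + ((if nxt = z + (0,1) then 1 else 0) - (if prv = z + (0,1) then 1 else 0)))
    (hSE : Wf γ (z - (0,1)) = Wf γ z - ((if nxt = z + (1,0) then 1 else 0) - (if prv = z + (1,0) then 1 else 0)))
    (hSW : Wf γ (z - (1,1)) = Wf γ (z - (0,1)) + ((if prv = z + (0,-1) then 1 else 0) - (if nxt = z + (0,-1) then 1 else 0))) :
    topw γ z = msq γ z nxt ∧ topw γ z = msq γ prv z := by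
  rcases ha with han | han | han | han <;> rcases hb with hbp | hbp | hbp | hbp
  · exact absurd (han.trans hbp.symm) hne
  · -- dn=(1, 0), dp=(-1, 0)
    have iNU : (if z + (1,0) = z + (0,1) then (1:ℤ) else 0) = 0 := by simp [Prod.ext_iff]; try omega
    have iPU : (if z + (-1,0) = z + (0,1) then (1:ℤ) else 0) = 0 := by simp [Prod.ext_iff]; try omega
    have iNR : (if z + (1,0) = z + (1,0) then (1:ℤ) else 0) = 1 := by simp [Prod.ext_iff]; try omega
    have iPR : (if z + (-1,0) = z + (1,0) then (1:ℤ) else 0) = 0 := by simp [Prod.ext_iff]; try omega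
    have iPD : (if z + (-1,0) = z + (0,-1) then (1:ℤ) else 0) = 0 := by simp [Prod.ext_iff]; try omega
    have iND : (if z + (1,0) = z + (0,-1) then (1:ℤ) else 0) = 0 := by simp [Prod.ext_iff]; try omega
    have eNW : Wf γ (z - (1,0)) = Wf γ z + 0 := by rw [hNW, han, hbp, iNU, iPU]; ring
    have eSE : Wf γ (z - (0,1)) = Wf γ z + (-1) := by rw [hSE, han, hbp, iNR, iPR]; ring
    have eSW : Wf γ (z - (1,1)) = Wf γ z + (-1) := by rw [hSW, eSE, han, hbp, iPD, iND]; ring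
    have hset : windSet γ z = {Wf γ z + (-1), Wf γ z + (-1) + 1} := by
      rw [windSet_eq, eSW, eNW, eSE]
      ext t; simp only [Finset.mem_insert, Finset.mem_singleton]; omega
    have htop := topw_eq_pair γ z (Wf γ z + (-1)) (Wf γ z + (-1) + 1) (by omega) hset
    constructor
    · -- out edge
      rw [han, htop]
      simp only [msq]
      rw [if_neg (by simp [Prod.ext_iff]; try omega), if_neg (by simp [Prod.ext_iff]; try omega), if_pos trivial]
      rw [eSE]
      push_cast
      ring
    · -- in edge
      rw [hbp, htop]
      simp only [msq]
      rw [if_neg (by simp [Prod.ext_iff]; try omega), if_neg (by simp [Prod.ext_iff]; try omega), if_pos (by first | rfl | (ext <;> simp <;> try omega))]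
      rw [show (z + (-1,0)) - (0,1) = z - (1,1) from by ext <;> simp <;> try omega]
      rw [show z + (-1,0) = z - (1,0) from by ext <;> simp <;> try omega]
      rw [eSW, eNW]
      push_cast
      ring
  · -- dn=(1, 0), dp=(0, 1)
    have iNU : (if z + (1,0) = z + (0,1) then (1:ℤ) else 0) = 0 := by simp [Prod.ext_iff]; try omega
    have iPU : (if z + (0,1) = z + (0,1) then (1:ℤ) else 0) = 1 := by simp [Prod.ext_iff]; try omega
    have iNR : (if z + (1,0) = z + (1,0) then (1:ℤ) else 0) = 1 := by simp [Prod.ext_iff]; try omega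
    have iPR : (if z + (0,1) = z + (1,0) then (1:ℤ) else 0) = 0 := by simp [Prod.ext_iff]; try omega
    have iPD : (if z + (0,1) = z + (0,-1) then (1:ℤ) else 0) = 0 := by simp [Prod.ext_iff]; try omega
    have iND : (if z + (1,0) = z + (0,-1) then (1:ℤ) else 0) = 0 := by simp [Prod.ext_iff]; try omega
    have eNW : Wf γ (z - (1,0)) = Wf γ z + (-1) := by rw [hNW, han, hbp, iNU, iPU]; ring
    have eSE : Wf γ (z - (0,1)) = Wf γ z + (-1) := by rw [hSE, han, hbp, iNR, iPR]; ring
    have eSW : Wf γ (z - (1,1)) = Wf γ z + (-1) := by rw [hSW, eSE, han, hbp, iPD, iND]; ring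
    have hset : windSet γ z = {Wf γ z + (-1), Wf γ z + (-1) + 1} := by
      rw [windSet_eq, eSW, eNW, eSE]
      ext t; simp only [Finset.mem_insert, Finset.mem_singleton]; omega
    have htop := topw_eq_pair γ z (Wf γ z + (-1)) (Wf γ z + (-1) + 1) (by omega) hset
    constructor
    · -- out edge
      rw [han, htop]
      simp only [msq]
      rw [if_neg (by simp [Prod.ext_iff]; try omega), if_neg (by simp [Prod.ext_iff]; try omega), if_pos trivial]
      rw [eSE]
      push_cast
      ring
    · -- in edge
      rw [hbp, htop]
      simp only [msq]
      rw [if_neg (by simp [Prod.ext_iff]; try omega), if_pos (by first | rfl | (ext <;> simp <;> try omega))]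
      rw [eNW]
      push_cast
      ring
  · -- dn=(1, 0), dp=(0, -1)
    have iNU : (if z + (1,0) = z + (0,1) then (1:ℤ) else 0) = 0 := by simp [Prod.ext_iff]; try omega
    have iPU : (if z + (0,-1) = z + (0,1) then (1:ℤ) else 0) = 0 := by simp [Prod.ext_iff]; try omega
    have iNR : (if z + (1,0) = z + (1,0) then (1:ℤ) else 0) = 1 := by simp [Prod.ext_iff]; try omega
    have iPR : (if z + (0,-1) = z + (1,0) then (1:ℤ) else 0) = 0 := by simp [Prod.ext_iff]; try omega
    have iPD : (if z + (0,-1) = z + (0,-1) then (1:ℤ) else 0) = 1 := by simp [Prod.ext_iff]; try omega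
    have iND : (if z + (1,0) = z + (0,-1) then (1:ℤ) else 0) = 0 := by simp [Prod.ext_iff]; try omega
    have eNW : Wf γ (z - (1,0)) = Wf γ z + 0 := by rw [hNW, han, hbp, iNU, iPU]; ring
    have eSE : Wf γ (z - (0,1)) = Wf γ z + (-1) := by rw [hSE, han, hbp, iNR, iPR]; ring
    have eSW : Wf γ (z - (1,1)) = Wf γ z + 0 := by rw [hSW, eSE, han, hbp, iPD, iND]; ring
    have hset : windSet γ z = {Wf γ z + (-1), Wf γ z + (-1) + 1} := by
      rw [windSet_eq, eSW, eNW, eSE]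
      ext t; simp only [Finset.mem_insert, Finset.mem_singleton]; omega
    have htop := topw_eq_pair γ z (Wf γ z + (-1)) (Wf γ z + (-1) + 1) (by omega) hset
    constructor
    · -- out edge
      rw [han, htop]
      simp only [msq]
      rw [if_neg (by simp [Prod.ext_iff]; try omega), if_neg (by simp [Prod.ext_iff]; try omega), if_pos trivial]
      rw [eSE]
      push_cast
      ring
    · -- in edge
      rw [hbp, htop]
      simp only [msq]
      rw [if_pos (by first | rfl | (ext <;> simp <;> try omega))]
      rw [show (z + (0,-1)) - (1,0) = z - (1,1) from by ext <;> simp <;> try omega]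
      rw [show z + (0,-1) = z - (0,1) from by ext <;> simp <;> try omega]
      rw [eSW, eSE]
      push_cast
      ring
  · -- dn=(-1, 0), dp=(1, 0)
    have iNU : (if z + (-1,0) = z + (0,1) then (1:ℤ) else 0) = 0 := by simp [Prod.ext_iff]; try omega
    have iPU : (if z + (1,0) = z + (0,1) then (1:ℤ) else 0) = 0 := by simp [Prod.ext_iff]; try omega
    have iNR : (if z + (-1,0) = z + (1,0) then (1:ℤ) else 0) = 0 := by simp [Prod.ext_iff]; try omega
    have iPR : (if z + (1,0) = z + (1,0) then (1:ℤ) else 0) = 1 := by simp [Prod.ext_iff]; try omega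
    have iPD : (if z + (1,0) = z + (0,-1) then (1:ℤ) else 0) = 0 := by simp [Prod.ext_iff]; try omega
    have iND : (if z + (-1,0) = z + (0,-1) then (1:ℤ) else 0) = 0 := by simp [Prod.ext_iff]; try omega
    have eNW : Wf γ (z - (1,0)) = Wf γ z + 0 := by rw [hNW, han, hbp, iNU, iPU]; ring
    have eSE : Wf γ (z - (0,1)) = Wf γ z + 1 := by rw [hSE, han, hbp, iNR, iPR]; ring
    have eSW : Wf γ (z - (1,1)) = Wf γ z + 1 := by rw [hSW, eSE, han, hbp, iPD, iND]; ring
    have hset : windSet γ z = {Wf γ z + 0, Wf γ z + 0 + 1} := by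
      rw [windSet_eq, eSW, eNW, eSE]
      ext t; simp only [Finset.mem_insert, Finset.mem_singleton]; omega
    have htop := topw_eq_pair γ z (Wf γ z + 0) (Wf γ z + 0 + 1) (by omega) hset
    constructor
    · -- out edge
      rw [han, htop]
      simp only [msq]
      rw [if_neg (by simp [Prod.ext_iff]; try omega), if_neg (by simp [Prod.ext_iff]; try omega), if_neg (by simp [Prod.ext_iff]; try omega), if_pos trivial]
      rw [show (z + (-1,0)) - (0,1) = z - (1,1) from by ext <;> simp <;> try omega]
      rw [show z + (-1,0) = z - (1,0) from by ext <;> simp <;> try omega]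
      rw [eSW, eNW]
      push_cast
      ring
    · -- in edge
      rw [hbp, htop]
      simp only [msq]
      rw [if_neg (by simp [Prod.ext_iff]; try omega), if_neg (by simp [Prod.ext_iff]; try omega), if_neg (by simp [Prod.ext_iff]; try omega), if_pos (by first | rfl | (ext <;> simp <;> try omega))]
      rw [eSE]
      push_cast
      ring
  · exact absurd (han.trans hbp.symm) hne
  · -- dn=(-1, 0), dp=(0, 1)
    have iNU : (if z + (-1,0) = z + (0,1) then (1:ℤ) else 0) = 0 := by simp [Prod.ext_iff]; try omega
    have iPU : (if z + (0,1) = z + (0,1) then (1:ℤ) else 0) = 1 := by simp [Prod.ext_iff]; try omega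
    have iNR : (if z + (-1,0) = z + (1,0) then (1:ℤ) else 0) = 0 := by simp [Prod.ext_iff]; try omega
    have iPR : (if z + (0,1) = z + (1,0) then (1:ℤ) else 0) = 0 := by simp [Prod.ext_iff]; try omega
    have iPD : (if z + (0,1) = z + (0,-1) then (1:ℤ) else 0) = 0 := by simp [Prod.ext_iff]; try omega
    have iND : (if z + (-1,0) = z + (0,-1) then (1:ℤ) else 0) = 0 := by simp [Prod.ext_iff]; try omega
    have eNW : Wf γ (z - (1,0)) = Wf γ z + (-1) := by rw [hNW, han, hbp, iNU, iPU]; ring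
    have eSE : Wf γ (z - (0,1)) = Wf γ z + 0 := by rw [hSE, han, hbp, iNR, iPR]; ring
    have eSW : Wf γ (z - (1,1)) = Wf γ z + 0 := by rw [hSW, eSE, han, hbp, iPD, iND]; ring
    have hset : windSet γ z = {Wf γ z + (-1), Wf γ z + (-1) + 1} := by
      rw [windSet_eq, eSW, eNW, eSE]
      ext t; simp only [Finset.mem_insert, Finset.mem_singleton]; omega
    have htop := topw_eq_pair γ z (Wf γ z + (-1)) (Wf γ z + (-1) + 1) (by omega) hset
    constructor
    · -- out edge
      rw [han, htop]
      simp only [msq]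
      rw [if_neg (by simp [Prod.ext_iff]; try omega), if_neg (by simp [Prod.ext_iff]; try omega), if_neg (by simp [Prod.ext_iff]; try omega), if_pos trivial]
      rw [show (z + (-1,0)) - (0,1) = z - (1,1) from by ext <;> simp <;> try omega]
      rw [show z + (-1,0) = z - (1,0) from by ext <;> simp <;> try omega]
      rw [eSW, eNW]
      push_cast
      ring
    · -- in edge
      rw [hbp, htop]
      simp only [msq]
      rw [if_neg (by simp [Prod.ext_iff]; try omega), if_pos (by first | rfl | (ext <;> simp <;> try omega))]
      rw [eNW]
      push_cast
      ring
  · -- dn=(-1, 0), dp=(0, -1)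
    have iNU : (if z + (-1,0) = z + (0,1) then (1:ℤ) else 0) = 0 := by simp [Prod.ext_iff]; try omega
    have iPU : (if z + (0,-1) = z + (0,1) then (1:ℤ) else 0) = 0 := by simp [Prod.ext_iff]; try omega
    have iNR : (if z + (-1,0) = z + (1,0) then (1:ℤ) else 0) = 0 := by simp [Prod.ext_iff]; try omega
    have iPR : (if z + (0,-1) = z + (1,0) then (1:ℤ) else 0) = 0 := by simp [Prod.ext_iff]; try omega
    have iPD : (if z + (0,-1) = z + (0,-1) then (1:ℤ) else 0) = 1 := by simp [Prod.ext_iff]; try omega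
    have iND : (if z + (-1,0) = z + (0,-1) then (1:ℤ) else 0) = 0 := by simp [Prod.ext_iff]; try omega
    have eNW : Wf γ (z - (1,0)) = Wf γ z + 0 := by rw [hNW, han, hbp, iNU, iPU]; ring
    have eSE : Wf γ (z - (0,1)) = Wf γ z + 0 := by rw [hSE, han, hbp, iNR, iPR]; ring
    have eSW : Wf γ (z - (1,1)) = Wf γ z + 1 := by rw [hSW, eSE, han, hbp, iPD, iND]; ring
    have hset : windSet γ z = {Wf γ z + 0, Wf γ z + 0 + 1} := by
      rw [windSet_eq, eSW, eNW, eSE]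
      ext t; simp only [Finset.mem_insert, Finset.mem_singleton]; omega
    have htop := topw_eq_pair γ z (Wf γ z + 0) (Wf γ z + 0 + 1) (by omega) hset
    constructor
    · -- out edge
      rw [han, htop]
      simp only [msq]
      rw [if_neg (by simp [Prod.ext_iff]; try omega), if_neg (by simp [Prod.ext_iff]; try omega), if_neg (by simp [Prod.ext_iff]; try omega), if_pos trivial]
      rw [show (z + (-1,0)) - (0,1) = z - (1,1) from by ext <;> simp <;> try omega]
      rw [show z + (-1,0) = z - (1,0) from by ext <;> simp <;> try omega]
      rw [eSW, eNW]
      push_cast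
      ring
    · -- in edge
      rw [hbp, htop]
      simp only [msq]
      rw [if_pos (by first | rfl | (ext <;> simp <;> try omega))]
      rw [show (z + (0,-1)) - (1,0) = z - (1,1) from by ext <;> simp <;> try omega]
      rw [show z + (0,-1) = z - (0,1) from by ext <;> simp <;> try omega]
      rw [eSW, eSE]
      push_cast
      ring
  · -- dn=(0, 1), dp=(1, 0)
    have iNU : (if z + (0,1) = z + (0,1) then (1:ℤ) else 0) = 1 := by simp [Prod.ext_iff]; try omega
    have iPU : (if z + (1,0) = z + (0,1) then (1:ℤ) else 0) = 0 := by simp [Prod.ext_iff]; try omega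
    have iNR : (if z + (0,1) = z + (1,0) then (1:ℤ) else 0) = 0 := by simp [Prod.ext_iff]; try omega
    have iPR : (if z + (1,0) = z + (1,0) then (1:ℤ) else 0) = 1 := by simp [Prod.ext_iff]; try omega
    have iPD : (if z + (1,0) = z + (0,-1) then (1:ℤ) else 0) = 0 := by simp [Prod.ext_iff]; try omega
    have iND : (if z + (0,1) = z + (0,-1) then (1:ℤ) else 0) = 0 := by simp [Prod.ext_iff]; try omega
    have eNW : Wf γ (z - (1,0)) = Wf γ z + 1 := by rw [hNW, han, hbp, iNU, iPU]; ring
    have eSE : Wf γ (z - (0,1)) = Wf γ z + 1 := by rw [hSE, han, hbp, iNR, iPR]; ring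
    have eSW : Wf γ (z - (1,1)) = Wf γ z + 1 := by rw [hSW, eSE, han, hbp, iPD, iND]; ring
    have hset : windSet γ z = {Wf γ z + 0, Wf γ z + 0 + 1} := by
      rw [windSet_eq, eSW, eNW, eSE]
      ext t; simp only [Finset.mem_insert, Finset.mem_singleton]; omega
    have htop := topw_eq_pair γ z (Wf γ z + 0) (Wf γ z + 0 + 1) (by omega) hset
    constructor
    · -- out edge
      rw [han, htop]
      simp only [msq]
      rw [if_pos trivial]
      rw [eNW]
      push_cast
      ring
    · -- in edge
      rw [hbp, htop]
      simp only [msq]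
      rw [if_neg (by simp [Prod.ext_iff]; try omega), if_neg (by simp [Prod.ext_iff]; try omega), if_neg (by simp [Prod.ext_iff]; try omega), if_pos (by first | rfl | (ext <;> simp <;> try omega))]
      rw [eSE]
      push_cast
      ring
  · -- dn=(0, 1), dp=(-1, 0)
    have iNU : (if z + (0,1) = z + (0,1) then (1:ℤ) else 0) = 1 := by simp [Prod.ext_iff]; try omega
    have iPU : (if z + (-1,0) = z + (0,1) then (1:ℤ) else 0) = 0 := by simp [Prod.ext_iff]; try omega
    have iNR : (if z + (0,1) = z + (1,0) then (1:ℤ) else 0) = 0 := by simp [Prod.ext_iff]; try omega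
    have iPR : (if z + (-1,0) = z + (1,0) then (1:ℤ) else 0) = 0 := by simp [Prod.ext_iff]; try omega
    have iPD : (if z + (-1,0) = z + (0,-1) then (1:ℤ) else 0) = 0 := by simp [Prod.ext_iff]; try omega
    have iND : (if z + (0,1) = z + (0,-1) then (1:ℤ) else 0) = 0 := by simp [Prod.ext_iff]; try omega
    have eNW : Wf γ (z - (1,0)) = Wf γ z + 1 := by rw [hNW, han, hbp, iNU, iPU]; ring
    have eSE : Wf γ (z - (0,1)) = Wf γ z + 0 := by rw [hSE, han, hbp, iNR, iPR]; ring
    have eSW : Wf γ (z - (1,1)) = Wf γ z + 0 := by rw [hSW, eSE, han, hbp, iPD, iND]; ring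
    have hset : windSet γ z = {Wf γ z + 0, Wf γ z + 0 + 1} := by
      rw [windSet_eq, eSW, eNW, eSE]
      ext t; simp only [Finset.mem_insert, Finset.mem_singleton]; omega
    have htop := topw_eq_pair γ z (Wf γ z + 0) (Wf γ z + 0 + 1) (by omega) hset
    constructor
    · -- out edge
      rw [han, htop]
      simp only [msq]
      rw [if_pos trivial]
      rw [eNW]
      push_cast
      ring
    · -- in edge
      rw [hbp, htop]
      simp only [msq]
      rw [if_neg (by simp [Prod.ext_iff]; try omega), if_neg (by simp [Prod.ext_iff]; try omega), if_pos (by first | rfl | (ext <;> simp <;> try omega))]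
      rw [show (z + (-1,0)) - (0,1) = z - (1,1) from by ext <;> simp <;> try omega]
      rw [show z + (-1,0) = z - (1,0) from by ext <;> simp <;> try omega]
      rw [eSW, eNW]
      push_cast
      ring
  · exact absurd (han.trans hbp.symm) hne
  · -- dn=(0, 1), dp=(0, -1)
    have iNU : (if z + (0,1) = z + (0,1) then (1:ℤ) else 0) = 1 := by simp [Prod.ext_iff]; try omega
    have iPU : (if z + (0,-1) = z + (0,1) then (1:ℤ) else 0) = 0 := by simp [Prod.ext_iff]; try omega
    have iNR : (if z + (0,1) = z + (1,0) then (1:ℤ) else 0) = 0 := by simp [Prod.ext_iff]; try omega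
    have iPR : (if z + (0,-1) = z + (1,0) then (1:ℤ) else 0) = 0 := by simp [Prod.ext_iff]; try omega
    have iPD : (if z + (0,-1) = z + (0,-1) then (1:ℤ) else 0) = 1 := by simp [Prod.ext_iff]; try omega
    have iND : (if z + (0,1) = z + (0,-1) then (1:ℤ) else 0) = 0 := by simp [Prod.ext_iff]; try omega
    have eNW : Wf γ (z - (1,0)) = Wf γ z + 1 := by rw [hNW, han, hbp, iNU, iPU]; ring
    have eSE : Wf γ (z - (0,1)) = Wf γ z + 0 := by rw [hSE, han, hbp, iNR, iPR]; ring
    have eSW : Wf γ (z - (1,1)) = Wf γ z + 1 := by rw [hSW, eSE, han, hbp, iPD, iND]; ring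
    have hset : windSet γ z = {Wf γ z + 0, Wf γ z + 0 + 1} := by
      rw [windSet_eq, eSW, eNW, eSE]
      ext t; simp only [Finset.mem_insert, Finset.mem_singleton]; omega
    have htop := topw_eq_pair γ z (Wf γ z + 0) (Wf γ z + 0 + 1) (by omega) hset
    constructor
    · -- out edge
      rw [han, htop]
      simp only [msq]
      rw [if_pos trivial]
      rw [eNW]
      push_cast
      ring
    · -- in edge
      rw [hbp, htop]
      simp only [msq]
      rw [if_pos (by first | rfl | (ext <;> simp <;> try omega))]
      rw [show (z + (0,-1)) - (1,0) = z - (1,1) from by ext <;> simp <;> try omega]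
      rw [show z + (0,-1) = z - (0,1) from by ext <;> simp <;> try omega]
      rw [eSW, eSE]
      push_cast
      ring
  · -- dn=(0, -1), dp=(1, 0)
    have iNU : (if z + (0,-1) = z + (0,1) then (1:ℤ) else 0) = 0 := by simp [Prod.ext_iff]; try omega
    have iPU : (if z + (1,0) = z + (0,1) then (1:ℤ) else 0) = 0 := by simp [Prod.ext_iff]; try omega
    have iNR : (if z + (0,-1) = z + (1,0) then (1:ℤ) else 0) = 0 := by simp [Prod.ext_iff]; try omega
    have iPR : (if z + (1,0) = z + (1,0) then (1:ℤ) else 0) = 1 := by simp [Prod.ext_iff]; try omega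
    have iPD : (if z + (1,0) = z + (0,-1) then (1:ℤ) else 0) = 0 := by simp [Prod.ext_iff]; try omega
    have iND : (if z + (0,-1) = z + (0,-1) then (1:ℤ) else 0) = 1 := by simp [Prod.ext_iff]; try omega
    have eNW : Wf γ (z - (1,0)) = Wf γ z + 0 := by rw [hNW, han, hbp, iNU, iPU]; ring
    have eSE : Wf γ (z - (0,1)) = Wf γ z + 1 := by rw [hSE, han, hbp, iNR, iPR]; ring
    have eSW : Wf γ (z - (1,1)) = Wf γ z + 0 := by rw [hSW, eSE, han, hbp, iPD, iND]; ring
    have hset : windSet γ z = {Wf γ z + 0, Wf γ z + 0 + 1} := by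
      rw [windSet_eq, eSW, eNW, eSE]
      ext t; simp only [Finset.mem_insert, Finset.mem_singleton]; omega
    have htop := topw_eq_pair γ z (Wf γ z + 0) (Wf γ z + 0 + 1) (by omega) hset
    constructor
    · -- out edge
      rw [han, htop]
      simp only [msq]
      rw [if_neg (by simp [Prod.ext_iff]; try omega), if_pos trivial]
      rw [show (z + (0,-1)) - (1,0) = z - (1,1) from by ext <;> simp <;> try omega]
      rw [show z + (0,-1) = z - (0,1) from by ext <;> simp <;> try omega]
      rw [eSW, eSE]
      push_cast
      ring
    · -- in edge
      rw [hbp, htop]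
      simp only [msq]
      rw [if_neg (by simp [Prod.ext_iff]; try omega), if_neg (by simp [Prod.ext_iff]; try omega), if_neg (by simp [Prod.ext_iff]; try omega), if_pos (by first | rfl | (ext <;> simp <;> try omega))]
      rw [eSE]
      push_cast
      ring
  · -- dn=(0, -1), dp=(-1, 0)
    have iNU : (if z + (0,-1) = z + (0,1) then (1:ℤ) else 0) = 0 := by simp [Prod.ext_iff]; try omega
    have iPU : (if z + (-1,0) = z + (0,1) then (1:ℤ) else 0) = 0 := by simp [Prod.ext_iff]; try omega
    have iNR : (if z + (0,-1) = z + (1,0) then (1:ℤ) else 0) = 0 := by simp [Prod.ext_iff]; try omega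
    have iPR : (if z + (-1,0) = z + (1,0) then (1:ℤ) else 0) = 0 := by simp [Prod.ext_iff]; try omega
    have iPD : (if z + (-1,0) = z + (0,-1) then (1:ℤ) else 0) = 0 := by simp [Prod.ext_iff]; try omega
    have iND : (if z + (0,-1) = z + (0,-1) then (1:ℤ) else 0) = 1 := by simp [Prod.ext_iff]; try omega
    have eNW : Wf γ (z - (1,0)) = Wf γ z + 0 := by rw [hNW, han, hbp, iNU, iPU]; ring
    have eSE : Wf γ (z - (0,1)) = Wf γ z + 0 := by rw [hSE, han, hbp, iNR, iPR]; ring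
    have eSW : Wf γ (z - (1,1)) = Wf γ z + (-1) := by rw [hSW, eSE, han, hbp, iPD, iND]; ring
    have hset : windSet γ z = {Wf γ z + (-1), Wf γ z + (-1) + 1} := by
      rw [windSet_eq, eSW, eNW, eSE]
      ext t; simp only [Finset.mem_insert, Finset.mem_singleton]; omega
    have htop := topw_eq_pair γ z (Wf γ z + (-1)) (Wf γ z + (-1) + 1) (by omega) hset
    constructor
    · -- out edge
      rw [han, htop]
      simp only [msq]
      rw [if_neg (by simp [Prod.ext_iff]; try omega), if_pos trivial]
      rw [show (z + (0,-1)) - (1,0) = z - (1,1) from by ext <;> simp <;> try omega]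
      rw [show z + (0,-1) = z - (0,1) from by ext <;> simp <;> try omega]
      rw [eSW, eSE]
      push_cast
      ring
    · -- in edge
      rw [hbp, htop]
      simp only [msq]
      rw [if_neg (by simp [Prod.ext_iff]; try omega), if_neg (by simp [Prod.ext_iff]; try omega), if_pos (by first | rfl | (ext <;> simp <;> try omega))]
      rw [show (z + (-1,0)) - (0,1) = z - (1,1) from by ext <;> simp <;> try omega]
      rw [show z + (-1,0) = z - (1,0) from by ext <;> simp <;> try omega]
      rw [eSW, eNW]
      push_cast
      ring
  · -- dn=(0, -1), dp=(0, 1)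
    have iNU : (if z + (0,-1) = z + (0,1) then (1:ℤ) else 0) = 0 := by simp [Prod.ext_iff]; try omega
    have iPU : (if z + (0,1) = z + (0,1) then (1:ℤ) else 0) = 1 := by simp [Prod.ext_iff]; try omega
    have iNR : (if z + (0,-1) = z + (1,0) then (1:ℤ) else 0) = 0 := by simp [Prod.ext_iff]; try omega
    have iPR : (if z + (0,1) = z + (1,0) then (1:ℤ) else 0) = 0 := by simp [Prod.ext_iff]; try omega
    have iPD : (if z + (0,1) = z + (0,-1) then (1:ℤ) else 0) = 0 := by simp [Prod.ext_iff]; try omega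
    have iND : (if z + (0,-1) = z + (0,-1) then (1:ℤ) else 0) = 1 := by simp [Prod.ext_iff]; try omega
    have eNW : Wf γ (z - (1,0)) = Wf γ z + (-1) := by rw [hNW, han, hbp, iNU, iPU]; ring
    have eSE : Wf γ (z - (0,1)) = Wf γ z + 0 := by rw [hSE, han, hbp, iNR, iPR]; ring
    have eSW : Wf γ (z - (1,1)) = Wf γ z + (-1) := by rw [hSW, eSE, han, hbp, iPD, iND]; ring
    have hset : windSet γ z = {Wf γ z + (-1), Wf γ z + (-1) + 1} := by
      rw [windSet_eq, eSW, eNW, eSE]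
      ext t; simp only [Finset.mem_insert, Finset.mem_singleton]; omega
    have htop := topw_eq_pair γ z (Wf γ z + (-1)) (Wf γ z + (-1) + 1) (by omega) hset
    constructor
    · -- out edge
      rw [han, htop]
      simp only [msq]
      rw [if_neg (by simp [Prod.ext_iff]; try omega), if_pos trivial]
      rw [show (z + (0,-1)) - (1,0) = z - (1,1) from by ext <;> simp <;> try omega]
      rw [show z + (0,-1) = z - (0,1) from by ext <;> simp <;> try omega]
      rw [eSW, eSE]
      push_cast
      ring
    · -- in edge
      rw [hbp, htop]
      simp only [msq]
      rw [if_neg (by simp [Prod.ext_iff]; try omega), if_pos (by first | rfl | (ext <;> simp <;> try omega))]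
      rw [eNW]
      push_cast
      ring
  · exact absurd (han.trans hbp.symm) hne

end ChargeProof
namespace ChargeProof

lemma sub_dir (a b : ℤ × ℤ)
    (h : a - b = (1,0) ∨ a - b = (-1,0) ∨ a - b = (0,1) ∨ a - b = (0,-1)) :
    a = b + (1,0) ∨ a = b + (-1,0) ∨ a = b + (0,1) ∨ a = b + (0,-1) := by
  rcases h with h|h|h|h
  · left; rw [← h]; ring
  · right; left; rw [← h]; ring
  · right; right; left; rw [← h]; ring
  · right; right; right; rw [← h]; ring

lemma sub_dir' (a b : ℤ × ℤ)
    (h : a - b = (1,0) ∨ a - b = (-1,0) ∨ a - b = (0,1) ∨ a - b = (0,-1)) :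
    b = a + (1,0) ∨ b = a + (-1,0) ∨ b = a + (0,1) ∨ b = a + (0,-1) := by
  have h1 : a.1 - b.1 = (a-b).1 := rfl
  have h2 : a.2 - b.2 = (a-b).2 := rfl
  rcases h with h|h|h|h <;> rw [h] at h1 h2
  · right; left; ext <;> simp <;> omega
  · left; ext <;> simp <;> omega
  · right; right; right; ext <;> simp <;> omega
  · right; right; left; ext <;> simp <;> omega

lemma vertex_msq (γ : LatticeCycle) (i : ℕ) (hi : i < γ.n) :
    topw γ (γ.v i) = msq γ (γ.v i) (γ.v (i+1)) ∧
    topw γ (γ.v i) = msq γ (γ.v (i + γ.n - 1)) (γ.v i) := by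
  have hn := γ.four_le
  have hps : γ.v i - γ.v (i + γ.n - 1) = (1,0) ∨ γ.v i - γ.v (i + γ.n - 1) = (-1,0) ∨
      γ.v i - γ.v (i + γ.n - 1) = (0,1) ∨ γ.v i - γ.v (i + γ.n - 1) = (0,-1) := by
    have h := γ.step (i + γ.n - 1)
    rw [show i + γ.n - 1 + 1 = i + γ.n from by omega, γ.periodic i] at h
    exact h
  have ha := sub_dir _ _ (γ.step i)
  have hb := sub_dir' _ _ hps
  have hne : γ.v (i+1) ≠ γ.v (i + γ.n - 1) := by
    intro hcon
    obtain ⟨-, hp2⟩ := v_prev_eq γ i hi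
    rw [← hp2] at hcon
    by_cases h0 : i + 1 = γ.n
    · have e1 : γ.v (i+1) = γ.v 0 := by
        rw [h0, show γ.n = 0 + γ.n from by omega, γ.periodic]
      rw [e1] at hcon
      have := γ.inj 0 (if i = 0 then γ.n - 1 else i - 1) (by omega) (by split <;> omega) hcon
      split at this <;> omega
    · have := γ.inj (i+1) (if i = 0 then γ.n - 1 else i - 1) (by omega) (by split <;> omega) hcon
      split at this <;> omega
  refine topw_vertex γ (γ.v i) (γ.v (i+1)) (γ.v (i + γ.n - 1)) hne ha hb ?_ ?_ ?_
  · rw [L1 γ (γ.v i), cnt_from_vertex γ i hi, cnt_to_vertex γ i hi]; try ring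
  · rw [L2 γ (γ.v i), cnt_from_vertex γ i hi, cnt_to_vertex γ i hi]; try ring
  · rw [show γ.v i + (0,-1) = γ.v i - (0,1) from by ext <;> simp <;> try omega]
    have h := L1 γ (γ.v i - (0,1))
    rw [prodarith1, prodarith2] at h
    rw [cnt_from_vertex γ i hi, cnt_to_vertex γ i hi] at h
    rw [h]; ring

lemma topw_step_lt (γ : LatticeCycle) (i : ℕ) (hi : i < γ.n) :
    topw γ (γ.v (i+1)) = topw γ (γ.v i) := by
  have hn := γ.four_le
  have h1 := (vertex_msq γ i hi).1
  by_cases h0 : i + 1 = γ.n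
  · have e1 : γ.v (i+1) = γ.v 0 := by
      rw [h0, show γ.n = 0 + γ.n from by omega, γ.periodic]
    have h2 := (vertex_msq γ 0 (by omega)).2
    rw [show 0 + γ.n - 1 = i from by omega] at h2
    rw [e1, h2, ← e1, h1]
  · have h2 := (vertex_msq γ (i+1) (by omega)).2
    rw [show i + 1 + γ.n - 1 = i + γ.n from by omega, γ.periodic i] at h2
    rw [h2, h1]

lemma v_add_mul (γ : LatticeCycle) (k m : ℕ) : γ.v (k + m * γ.n) = γ.v k := by
  induction m with
  | zero => simp
  | succ m ih =>
    rw [show k + (m+1) * γ.n = (k + m * γ.n) + γ.n from by ring, γ.periodic, ih]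

lemma v_mod (γ : LatticeCycle) (k : ℕ) : γ.v k = γ.v (k % γ.n) := by
  conv_lhs => rw [show k = k % γ.n + (k / γ.n) * γ.n from by
    rw [Nat.mod_add_div' k γ.n]]
  rw [v_add_mul]

lemma topw_step (γ : LatticeCycle) (k : ℕ) :
    topw γ (γ.v (k+1)) = topw γ (γ.v k) := by
  have hn := γ.four_le
  have e1 : γ.v k = γ.v (k % γ.n) := v_mod γ k
  have e2 : γ.v (k+1) = γ.v (k % γ.n + 1) := by
    conv_lhs => rw [show k + 1 = (k % γ.n + 1) + (k / γ.n) * γ.n from by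
      have := Nat.mod_add_div' k γ.n; omega]
    rw [v_add_mul]
  rw [e1, e2]
  exact topw_step_lt γ (k % γ.n) (Nat.mod_lt _ (by omega))

lemma topw_const (γ : LatticeCycle) (k : ℕ) : topw γ (γ.v k) = topw γ (γ.v 0) := by
  induction k with
  | zero => rfl
  | succ k ih => rw [topw_step, ih]

end ChargeProof
namespace ChargeProof

lemma col_step (γ : LatticeCycle) (k : ℕ) : col (γ.v (k+1)) = - col (γ.v k) := by
  rcases γ.step k with h|h|h|h <;>
  · have h1 := congrArg Prod.fst h
    have h2 := congrArg Prod.snd h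
    simp at h1 h2
    simp only [col, Int.even_iff]
    split_ifs <;> omega

lemma col_pow (γ : LatticeCycle) : ∀ k, col (γ.v k) * (-1)^k = col (γ.v 0) := by
  intro k
  induction k with
  | zero => simp
  | succ k ih => rw [col_step, pow_succ]; rw [← ih]; ring

lemma n_even (γ : LatticeCycle) : Even γ.n := by
  have h := col_pow γ γ.n
  have hv : γ.v γ.n = γ.v 0 := by rw [show γ.n = 0 + γ.n from by omega, γ.periodic]
  rw [hv] at h
  have hcol : col (γ.v 0) = 1 ∨ col (γ.v 0) = -1 := by unfold col; split <;> simp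
  have hpow : ((-1 : ℤ))^γ.n = 1 := by rcases hcol with hc | hc <;> rw [hc] at h <;> omega
  exact (neg_one_pow_eq_one_iff_even (by omega : (-1:ℤ) ≠ 1)).mp hpow

lemma alt_sum (γ : LatticeCycle) : ∑ i ∈ Finset.range γ.n, (col (γ.v i) : ℚ) = 0 := by
  obtain ⟨m, hm⟩ := n_even γ
  have key : ∀ l : ℕ, ∑ i ∈ Finset.range (2*l), (col (γ.v i) : ℚ) = 0 := by
    intro l
    induction l with
    | zero => simp
    | succ l ih =>
      rw [show 2*(l+1) = (2*l + 1) + 1 from by ring, Finset.sum_range_succ,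
        Finset.sum_range_succ, ih, col_step]
      push_cast
      ring
  rw [show γ.n = 2*m from by omega]
  exact key m

lemma vertexSum (γ : LatticeCycle) :
    ∑ i ∈ Finset.range γ.n, (col (γ.v i) : ℚ) * topw γ (γ.v i) = 0 := by
  have : ∀ i ∈ Finset.range γ.n, (col (γ.v i) : ℚ) * topw γ (γ.v i)
      = (col (γ.v i) : ℚ) * topw γ (γ.v 0) := by
    intro i _
    rw [topw_const]
  rw [Finset.sum_congr rfl this, ← Finset.sum_mul, alt_sum, zero_mul]

end ChargeProof
namespace ChargeProof

lemma int_cast_unit_interval (c : ℤ) (b : ℝ) (h : (c:ℝ) = b) (h0 : 0 ≤ b) (h1 : b ≤ 1) :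
    c = 0 ∨ c = 1 := by
  have hc0 : (0:ℤ) ≤ c := by exact_mod_cast h ▸ h0
  have hc1 : c ≤ 1 := by exact_mod_cast h ▸ h1
  omega

lemma eq_of_toR_coords (z u : ℤ × ℤ) (h1 : (z.1:ℝ) = (u.1:ℝ)) (h2 : (z.2:ℝ) = (u.2:ℝ)) :
    z = u := by
  ext
  · exact_mod_cast h1
  · exact_mod_cast h2

lemma seg_lattice (u w z : ℤ × ℤ) (hz : toR z ∈ segment ℝ (toR u) (toR w))
    (hd : w - u = (1,0) ∨ w - u = (-1,0) ∨ w - u = (0,1) ∨ w - u = (0,-1)) :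
    z = u ∨ z = w := by
  obtain ⟨a, b, ha, hb, hab, heq⟩ := hz
  have e1 := congrArg Prod.fst heq
  have e2 := congrArg Prod.snd heq
  simp [toR, Prod.smul_def, smul_eq_mul] at e1 e2
  have haeq : a = 1 - b := by linarith
  subst haeq
  have hb1 : b ≤ 1 := by linarith
  have g1 : (w.1 : ℝ) = u.1 + ((w-u).1 : ℝ) := by push_cast; simp
  have g2 : (w.2 : ℝ) = u.2 + ((w-u).2 : ℝ) := by push_cast; simp
  rcases hd with h|h|h|h <;> rw [h] at g1 g2 <;>
    [ (have d1 : ((1:ℤ):ℝ) = 1 := by norm_num);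
      (have d1 : ((1:ℤ):ℝ) = 1 := by norm_num);
      (have d1 : ((1:ℤ):ℝ) = 1 := by norm_num);
      (have d1 : ((1:ℤ):ℝ) = 1 := by norm_num)]
  · -- w = u + (1,0)
    have hz2 : (z.2:ℝ) = u.2 := by simp at g2; rw [g2] at e2; linarith
    have hc : ((z.1 - u.1 : ℤ):ℝ) = b := by push_cast; simp at g1; rw [g1] at e1; linarith
    rcases int_cast_unit_interval _ _ hc hb hb1 with hc0 | hc1
    · left; apply eq_of_toR_coords <;> [skip; exact hz2]
      have : z.1 = u.1 := by omega
      exact_mod_cast congrArg (Int.cast : ℤ → ℝ) this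
    · right; apply eq_of_toR_coords
      · have : z.1 = u.1 + 1 := by omega
        simp at g1; rw [g1]; exact_mod_cast congrArg (Int.cast : ℤ → ℝ) this
      · simp at g2; rw [g2]; exact hz2
  · -- w = u + (-1,0)
    have hz2 : (z.2:ℝ) = u.2 := by simp at g2; rw [g2] at e2; linarith
    have hc : ((u.1 - z.1 : ℤ):ℝ) = b := by push_cast; simp at g1; rw [g1] at e1; linarith
    rcases int_cast_unit_interval _ _ hc hb hb1 with hc0 | hc1
    · left; apply eq_of_toR_coords <;> [skip; exact hz2]
      have : z.1 = u.1 := by omega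
      exact_mod_cast congrArg (Int.cast : ℤ → ℝ) this
    · right; apply eq_of_toR_coords
      · have : z.1 = u.1 - 1 := by omega
        simp at g1; rw [g1]; push_cast; exact_mod_cast congrArg (Int.cast : ℤ → ℝ) this
      · simp at g2; rw [g2]; exact hz2
  · -- w = u + (0,1)
    have hz1 : (z.1:ℝ) = u.1 := by simp at g1; rw [g1] at e1; linarith
    have hc : ((z.2 - u.2 : ℤ):ℝ) = b := by push_cast; simp at g2; rw [g2] at e2; linarith
    rcases int_cast_unit_interval _ _ hc hb hb1 with hc0 | hc1
    · left; apply eq_of_toR_coords <;> [exact hz1; skip]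
      have : z.2 = u.2 := by omega
      exact_mod_cast congrArg (Int.cast : ℤ → ℝ) this
    · right; apply eq_of_toR_coords
      · simp at g1; rw [g1]; exact hz1
      · have : z.2 = u.2 + 1 := by omega
        simp at g2; rw [g2]; exact_mod_cast congrArg (Int.cast : ℤ → ℝ) this
  · -- w = u + (0,-1)
    have hz1 : (z.1:ℝ) = u.1 := by simp at g1; rw [g1] at e1; linarith
    have hc : ((u.2 - z.2 : ℤ):ℝ) = b := by push_cast; simp at g2; rw [g2] at e2; linarith
    rcases int_cast_unit_interval _ _ hc hb hb1 with hc0 | hc1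
    · left; apply eq_of_toR_coords <;> [exact hz1; skip]
      have : z.2 = u.2 := by omega
      exact_mod_cast congrArg (Int.cast : ℤ → ℝ) this
    · right; apply eq_of_toR_coords
      · simp at g1; rw [g1]; exact hz1
      · have : z.2 = u.2 - 1 := by omega
        simp at g2; rw [g2]; push_cast; exact_mod_cast congrArg (Int.cast : ℤ → ℝ) this

lemma image_iff (γ : LatticeCycle) (z : ℤ × ℤ) : toR z ∈ γ.image ↔ γ.isVertex z := by
  have hn := γ.four_le
  constructor
  · intro h
    unfold LatticeCycle.image at h
    rw [Set.mem_iUnion₂] at h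
    obtain ⟨i, hi, hseg⟩ := h
    rcases seg_lattice (γ.v i) (γ.v (i+1)) z hseg (γ.step i) with h|h
    · exact ⟨i, Finset.mem_range.mp hi, h.symm⟩
    · exact ⟨(i+1) % γ.n, Nat.mod_lt _ (by omega), by rw [← v_mod]; exact h.symm⟩
  · rintro ⟨i, hi, hv⟩
    unfold LatticeCycle.image
    rw [Set.mem_iUnion₂]
    exact ⟨i, Finset.mem_range.mpr hi, hv ▸ left_mem_segment ℝ _ _⟩

end ChargeProof
namespace ChargeProof

lemma Wf_far (γ : LatticeCycle) (M : ℤ)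
    (hM : ∀ i, i < γ.n → -M ≤ (γ.v i).1 ∧ (γ.v i).1 ≤ M ∧ -M ≤ (γ.v i).2 ∧ (γ.v i).2 ≤ M)
    (z : ℤ × ℤ) (hz : M < z.2 ∨ z.2 < -M ∨ M ≤ z.1) : Wf γ z = 0 := by
  have hn := γ.four_le
  unfold Wf wind
  apply Finset.sum_eq_zero
  intro i hi
  have hb1 := hM i (Finset.mem_range.mp hi)
  have hb2 : -M ≤ (γ.v (i+1)).1 ∧ (γ.v (i+1)).1 ≤ M ∧ -M ≤ (γ.v (i+1)).2 ∧ (γ.v (i+1)).2 ≤ M := by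
    rw [v_mod γ (i+1)]
    exact hM _ (Nat.mod_lt _ (by omega))
  rw [vcross_toR, if_neg, if_neg]
  · ring
  · rintro ⟨-, h2, h3⟩; omega
  · rintro ⟨-, h2, h3⟩; omega

lemma Wf_farleft (γ : LatticeCycle) (M : ℤ)
    (hM : ∀ i, i < γ.n → -M ≤ (γ.v i).1 ∧ (γ.v i).1 ≤ M ∧ -M ≤ (γ.v i).2 ∧ (γ.v i).2 ≤ M)
    (z : ℤ × ℤ) (hz : z.1 ≤ -M-1) : Wf γ z = 0 := by
  have hn := γ.four_le
  have key : ∀ i ∈ Finset.range γ.n, vcross (γ.v i) (γ.v (i+1)) (toR z)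
      = (fun q : ℤ × ℤ => if z.2 < q.2 then (1:ℤ) else 0) (γ.v (i+1))
        - (fun q : ℤ × ℤ => if z.2 < q.2 then (1:ℤ) else 0) (γ.v i) := by
    intro i hi
    have hb1 := hM i (Finset.mem_range.mp hi)
    have hb2 : -M ≤ (γ.v (i+1)).1 ∧ (γ.v (i+1)).1 ≤ M ∧ -M ≤ (γ.v (i+1)).2 ∧ (γ.v (i+1)).2 ≤ M := by
      rw [v_mod γ (i+1)]
      exact hM _ (Nat.mod_lt _ (by omega))
    rcases γ.step i with h|h|h|h <;>
    · have e1 := congrArg Prod.fst h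
      have e2 := congrArg Prod.snd h
      simp at e1 e2
      rw [vcross_toR]
      simp only [Prod.ext_iff]
      split_ifs <;> omega
  unfold Wf wind
  rw [Finset.sum_congr rfl key]
  exact sum_tele γ (fun q : ℤ × ℤ => if z.2 < q.2 then (1:ℤ) else 0)

lemma far_zero (γ : LatticeCycle) (M : ℤ)
    (hM : ∀ i, i < γ.n → -M ≤ (γ.v i).1 ∧ (γ.v i).1 ≤ M ∧ -M ≤ (γ.v i).2 ∧ (γ.v i).2 ≤ M)
    (z : ℤ × ℤ) (hz : M+2 < z.1 ∨ z.1 < -M-2 ∨ M+2 < z.2 ∨ z.2 < -M-2) :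
    Wf γ z = 0 ∧ topw γ z = 0 := by
  have wz : ∀ p : ℤ × ℤ, (z.1 - 1 ≤ p.1 ∧ p.1 ≤ z.1 ∧ z.2 - 1 ≤ p.2 ∧ p.2 ≤ z.2) → Wf γ p = 0 := by
    intro p hp
    rcases hz with h|h|h|h
    · exact Wf_far γ M hM p (Or.inr (Or.inr (by omega)))
    · exact Wf_farleft γ M hM p (by omega)
    · exact Wf_far γ M hM p (Or.inl (by omega))
    · exact Wf_far γ M hM p (Or.inr (Or.inl (by omega)))
  have c0 : Wf γ z = 0 := wz z (by omega)
  have c1 : Wf γ (z - (1,0)) = 0 := wz _ (by refine ⟨?_,?_,?_,?_⟩ <;> simp <;> omega)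
  have c2 : Wf γ (z - (0,1)) = 0 := wz _ (by refine ⟨?_,?_,?_,?_⟩ <;> simp <;> omega)
  have c3 : Wf γ (z - (1,1)) = 0 := wz _ (by refine ⟨?_,?_,?_,?_⟩ <;> simp <;> omega)
  refine ⟨c0, ?_⟩
  have := topw_eq_single γ z 0 (by rw [windSet_eq, c0, c1, c2, c3]; simp)
  simpa using this

end ChargeProof

/-- Lemma 3.1: `charge_int(γ) = Σ_{v ∈ ℤ²} col(v)·topw(γ,v)`,
the right-hand sum having only finitely many nonzero terms. -/
theorem chargeInt_eq_sum_col_topw (γ : LatticeCycle) :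
    (Function.support (fun v : ℤ × ℤ => (col v : ℚ) * topw γ v)).Finite ∧
    (chargeInt γ : ℚ) = ∑ᶠ v : ℤ × ℤ, (col v : ℚ) * topw γ v := by
  classical
  open ChargeProof in
  have hn := γ.four_le
  set M : ℤ := ∑ i ∈ Finset.range γ.n, (|(γ.v i).1| + |(γ.v i).2|) with hMdef
  have hM : ∀ i, i < γ.n → -M ≤ (γ.v i).1 ∧ (γ.v i).1 ≤ M ∧ -M ≤ (γ.v i).2 ∧ (γ.v i).2 ≤ M := by
    intro i hi
    have hle : |(γ.v i).1| + |(γ.v i).2| ≤ M := by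
      apply Finset.single_le_sum (f := fun j => |(γ.v j).1| + |(γ.v j).2|)
        (fun j _ => by positivity) (Finset.mem_range.mpr hi)
    have a1 := abs_nonneg (γ.v i).1
    have a2 := abs_nonneg (γ.v i).2
    have b1 := le_abs_self (γ.v i).1
    have b2 := le_abs_self (γ.v i).2
    have c1 := neg_abs_le (γ.v i).1
    have c2 := neg_abs_le (γ.v i).2
    refine ⟨by linarith, by linarith, by linarith, by linarith⟩
  set bx : Finset (ℤ × ℤ) := Finset.Icc (-M-2, -M-2) (M+2, M+2) with hbx
  have hout : ∀ z : ℤ × ℤ, z ∉ bx → Wf γ z = 0 ∧ topw γ z = 0 := by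
    intro z hz
    apply far_zero γ M hM
    rw [hbx, Finset.mem_Icc, Prod.le_def, Prod.le_def] at hz
    simp only [not_and_or, not_le] at hz
    rcases hz with (h|h)|(h|h) <;> [(right;left;omega); (right;right;right;omega); (left;omega); (right;right;left;omega)]
  have hsupp : Function.support (fun z : ℤ × ℤ => (col z : ℚ) * topw γ z) ⊆ ↑bx := by
    intro z hz
    by_contra hnm
    apply hz
    simp only [(hout z hnm).2, mul_zero]
  refine ⟨Set.Finite.subset bx.finite_toSet hsupp, ?_⟩
  rw [finsum_eq_sum_of_support_subset _ hsupp]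
  have hsupp2 : Function.support
      (fun z : ℤ × ℤ => if toR z ∉ γ.image then col z * wind γ (toR z) else 0) ⊆ ↑bx := by
    intro z hz
    by_contra hnm
    apply hz
    simp only
    split_ifs
    · rfl
    · have h0 : wind γ (toR z) = 0 := (hout z hnm).1
      rw [h0, mul_zero]
  unfold chargeInt
  rw [finsum_eq_sum_of_support_subset _ hsupp2]
  have castsum : ((∑ z ∈ bx, if toR z ∉ γ.image then col z * wind γ (toR z) else 0 : ℤ) : ℚ)
      = ∑ z ∈ bx, (if toR z ∉ γ.image then (col z : ℚ) * (Wf γ z : ℚ) else 0) := by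
    rw [Int.cast_sum]
    refine Finset.sum_congr rfl (fun z _ => ?_)
    rw [apply_ite (fun x : ℤ => (x : ℚ))]
    push_cast
    rfl
  rw [castsum]
  rw [← Finset.sum_filter_add_sum_filter_not bx (fun z => γ.isVertex z)
      (fun z => if toR z ∉ γ.image then (col z : ℚ) * (Wf γ z : ℚ) else 0),
    ← Finset.sum_filter_add_sum_filter_not bx (fun z => γ.isVertex z)
      (fun z => (col z : ℚ) * topw γ z)]
  congr 1
  · -- vertex parts
    have lhs0 : ∑ z ∈ bx.filter (fun z => γ.isVertex z),
        (if toR z ∉ γ.image then (col z : ℚ) * (Wf γ z : ℚ) else 0) = 0 := by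
      apply Finset.sum_eq_zero
      intro z hz
      rw [if_neg (by
        rw [not_not]
        exact (image_iff γ z).mpr (Finset.mem_filter.mp hz).2)]
    rw [lhs0]
    have hvx : bx.filter (fun z => γ.isVertex z) = (Finset.range γ.n).image γ.v := by
      ext z
      simp only [Finset.mem_filter, Finset.mem_image, Finset.mem_range]
      constructor
      · rintro ⟨-, i, hi, hv⟩
        exact ⟨i, hi, hv⟩
      · rintro ⟨i, hi, hv⟩
        refine ⟨?_, ⟨i, hi, hv⟩⟩
        have hb := hM i hi
        rw [hbx, Finset.mem_Icc, Prod.le_def, Prod.le_def]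
        subst hv
        constructor
        · constructor <;> simp <;> omega
        · constructor <;> simp <;> omega
    rw [hvx, Finset.sum_image (fun i hi j hj hv =>
      γ.inj i j (Finset.mem_range.mp hi) (Finset.mem_range.mp hj) hv)]
    exact (vertexSum γ).symm
  · refine Finset.sum_congr rfl (fun z hz => ?_)
    have hnv : ¬ γ.isVertex z := (Finset.mem_filter.mp hz).2
    rw [if_pos (fun h => hnv ((image_iff γ z).mp h)), topw_nonvertex γ z hnv]
end

section
/- (Lemma 3.2 of the paper.) Let γ be an oriented simple lattice cycle. Then Σ_{v ∈ ℤ²} col(v)·metricw(γ,v) = 0, where the sum has only finitely many nonzero terms. -/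
open scoped Classical

/-! ### Auxiliary lemmas -/

lemma LatticeCycle.v_mod (γ : LatticeCycle) (i : ℕ) : γ.v (i % γ.n) = γ.v i := by
  induction i using Nat.strong_induction_on with
  | _ i ih =>
    by_cases h : i < γ.n
    · rw [Nat.mod_eq_of_lt h]
    · push_neg at h
      have hper := γ.periodic (i - γ.n)
      rw [Nat.sub_add_cancel h] at hper
      have hn : 0 < γ.n := by have := γ.four_le; omega
      rw [Nat.mod_eq_sub_mod h, ih (i - γ.n) (by omega), hper]

lemma vcross_eq_zero_of (u w : ℤ × ℤ) (p : ℝ × ℝ)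
    (hu : ¬(p.1 < (u.1 : ℝ) ∧ (u.2 : ℝ) ≤ p.2 ∧ p.2 < (u.2 : ℝ) + 1))
    (hw : ¬(p.1 < (w.1 : ℝ) ∧ (w.2 : ℝ) ≤ p.2 ∧ p.2 < (w.2 : ℝ) + 1)) :
    vcross u w p = 0 := by
  unfold vcross
  split_ifs with h1 h2
  · exact absurd ⟨h1.2.1, h1.2.2.1, h1.2.2.2⟩ hu
  · exact absurd ⟨h2.2.1, h2.2.2.1, h2.2.2.2⟩ hw
  · rfl

lemma vcross_horiz (u w : ℤ × ℤ) (p : ℝ × ℝ) (h : w.2 = u.2) : vcross u w p = 0 := by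
  unfold vcross
  split_ifs with c1 c2
  · exfalso; have := congrArg Prod.snd c1.1; simp at this; omega
  · exfalso; have := congrArg Prod.snd c2.1; simp at this; omega
  · rfl

lemma vcross_up (u w : ℤ × ℤ) (p : ℝ × ℝ) (h : w = (u.1, u.2 + 1)) (hx : p.1 < (u.1 : ℝ)) :
    vcross u w p =
      (if p.2 < (w.2 : ℝ) then (1 : ℤ) else 0) - (if p.2 < (u.2 : ℝ) then (1 : ℤ) else 0) := by
  subst h
  unfold vcross
  have h2 : ¬ (u = ((u.1, u.2 + 1).1, (u.1, u.2 + 1).2 + 1) ∧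
      p.1 < (((u.1, u.2 + 1) : ℤ × ℤ).1 : ℝ) ∧ ((((u.1, u.2 + 1) : ℤ × ℤ)).2 : ℝ) ≤ p.2 ∧
      p.2 < ((((u.1, u.2 + 1) : ℤ × ℤ)).2 : ℝ) + 1) := by
    rintro ⟨hc, -⟩; have := congrArg Prod.snd hc; simp at this; omega
  rw [if_neg h2]
  have hw2 : ((((u.1, u.2 + 1) : ℤ × ℤ)).2 : ℝ) = (u.2 : ℝ) + 1 := by push_cast; ring
  rw [hw2]
  by_cases h5 : (u.2 : ℝ) ≤ p.2 <;> by_cases h6 : p.2 < (u.2 : ℝ) + 1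
  · rw [if_pos ⟨rfl, hx, h5, h6⟩, if_pos h6, if_neg (not_lt.mpr h5)]; norm_num
  · rw [if_neg (fun hc => h6 hc.2.2.2), if_neg h6, if_neg (not_lt.mpr h5)]; norm_num
  · rw [if_neg (fun hc => h5 hc.2.2.1), if_pos h6, if_pos (lt_of_not_ge h5)]; norm_num
  · exact absurd (by linarith [lt_of_not_ge h5]) h6

lemma vcross_down (u w : ℤ × ℤ) (p : ℝ × ℝ) (h : u = (w.1, w.2 + 1)) (hx : p.1 < (w.1 : ℝ)) :
    vcross u w p =
      (if p.2 < (w.2 : ℝ) then (1 : ℤ) else 0) - (if p.2 < (u.2 : ℝ) then (1 : ℤ) else 0) := by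
  subst h
  unfold vcross
  have h1 : ¬ (w = (((w.1, w.2 + 1) : ℤ × ℤ).1, ((w.1, w.2 + 1) : ℤ × ℤ).2 + 1) ∧
      p.1 < ((((w.1, w.2 + 1) : ℤ × ℤ)).1 : ℝ) ∧ ((((w.1, w.2 + 1) : ℤ × ℤ)).2 : ℝ) ≤ p.2 ∧
      p.2 < ((((w.1, w.2 + 1) : ℤ × ℤ)).2 : ℝ) + 1) := by
    rintro ⟨hc, -⟩; have := congrArg Prod.snd hc; simp at this; omega
  rw [if_neg h1]
  have hu2 : ((((w.1, w.2 + 1) : ℤ × ℤ)).2 : ℝ) = (w.2 : ℝ) + 1 := by push_cast; ring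
  rw [hu2]
  by_cases h5 : (w.2 : ℝ) ≤ p.2 <;> by_cases h6 : p.2 < (w.2 : ℝ) + 1
  · rw [if_pos ⟨rfl, hx, h5, h6⟩, if_neg (not_lt.mpr (by linarith)), if_pos h6]; norm_num
  · rw [if_neg (fun hc => h6 hc.2.2.2), if_neg (not_lt.mpr h5), if_neg h6]; norm_num
  · rw [if_neg (fun hc => h5 hc.2.2.1), if_pos (lt_of_not_ge h5), if_pos h6]; norm_num
  · exact absurd (by linarith [lt_of_not_ge h5]) h6

/-- If `p` lies strictly to the left of all vertices, the winding number vanishes. -/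
lemma wind_eq_zero_left (γ : LatticeCycle) (p : ℝ × ℝ)
    (h : ∀ i, p.1 < ((γ.v i).1 : ℝ)) : wind γ p = 0 := by
  have key : ∀ i, vcross (γ.v i) (γ.v (i + 1)) p =
      (if p.2 < ((γ.v (i + 1)).2 : ℝ) then (1 : ℤ) else 0) -
      (if p.2 < ((γ.v i).2 : ℝ) then (1 : ℤ) else 0) := by
    intro i
    rcases γ.step i with hs | hs | hs | hs
    · have e2 : (γ.v (i + 1)).2 = (γ.v i).2 := by
        have := congrArg Prod.snd hs; simp [Prod.snd_sub] at this; omega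
      rw [vcross_horiz _ _ _ e2, e2, sub_self]
    · have e2 : (γ.v (i + 1)).2 = (γ.v i).2 := by
        have := congrArg Prod.snd hs; simp [Prod.snd_sub] at this; omega
      rw [vcross_horiz _ _ _ e2, e2, sub_self]
    · have e1' : (γ.v (i + 1)).1 = (γ.v i).1 := by
        have := congrArg Prod.fst hs; simp [Prod.fst_sub] at this; omega
      have e2 : (γ.v (i + 1)).2 = (γ.v i).2 + 1 := by
        have := congrArg Prod.snd hs; simp [Prod.snd_sub] at this; omega
      exact vcross_up _ _ _ (Prod.ext e1' e2) (h i)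
    · have e1' : (γ.v i).1 = (γ.v (i + 1)).1 := by
        have := congrArg Prod.fst hs; simp [Prod.fst_sub] at this; omega
      have e2 : (γ.v i).2 = (γ.v (i + 1)).2 + 1 := by
        have := congrArg Prod.snd hs; simp [Prod.snd_sub] at this; omega
      exact vcross_down _ _ _ (Prod.ext e1' e2) (h (i + 1))
  unfold wind
  rw [Finset.sum_congr rfl fun i _ => key i, Finset.sum_range_sub
    (f := fun i => if p.2 < ((γ.v i).2 : ℝ) then (1 : ℤ) else 0)]
  have : γ.v γ.n = γ.v 0 := by have := γ.periodic 0; simpa using this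
  rw [this, sub_self]

/-- Outside a bounded region the winding number vanishes. -/
lemma wind_eq_zero_outside (γ : LatticeCycle) (M : ℤ)
    (hM : ∀ i, |(γ.v i).1| ≤ M ∧ |(γ.v i).2| ≤ M) (p : ℝ × ℝ)
    (hp : (M : ℝ) ≤ p.1 ∨ p.1 ≤ -(M : ℝ) - 1 ∨ (M : ℝ) + 1 ≤ p.2 ∨ p.2 < -(M : ℝ)) :
    wind γ p = 0 := by
  have hb : ∀ i, -(M : ℝ) ≤ ((γ.v i).1 : ℝ) ∧ ((γ.v i).1 : ℝ) ≤ M ∧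
      -(M : ℝ) ≤ ((γ.v i).2 : ℝ) ∧ ((γ.v i).2 : ℝ) ≤ M := by
    intro i
    obtain ⟨h1, h2⟩ := hM i
    rw [abs_le] at h1 h2
    constructor
    · exact_mod_cast h1.1
    refine ⟨by exact_mod_cast h1.2, by exact_mod_cast h2.1, by exact_mod_cast h2.2⟩
  rcases hp with hp | hp | hp | hp
  · refine Finset.sum_eq_zero fun i _ => vcross_eq_zero_of _ _ _ ?_ ?_
    · rintro ⟨h1, -, -⟩; have := (hb i).2.1; linarith
    · rintro ⟨h1, -, -⟩; have := (hb (i + 1)).2.1; linarith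
  · exact wind_eq_zero_left γ p fun i => by have := (hb i).1; linarith
  · refine Finset.sum_eq_zero fun i _ => vcross_eq_zero_of _ _ _ ?_ ?_
    · rintro ⟨-, -, h3⟩; have := (hb i).2.2.2; linarith
    · rintro ⟨-, -, h3⟩; have := (hb (i + 1)).2.2.2; linarith
  · refine Finset.sum_eq_zero fun i _ => vcross_eq_zero_of _ _ _ ?_ ?_
    · rintro ⟨-, h2, -⟩; have := (hb i).2.2.1; linarith
    · rintro ⟨-, h2, -⟩; have := (hb (i + 1)).2.2.1; linarith

/-- The winding number at the north-east corner of `u`, as a rational. -/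
noncomputable def Wfun (γ : LatticeCycle) (u : ℤ × ℤ) : ℚ := (wind γ (corner u 1 1) : ℚ)

lemma Wfun_support_finite (γ : LatticeCycle) : (Function.support (Wfun γ)).Finite := by
  obtain ⟨M, hM⟩ : ∃ M : ℤ, ∀ i, |(γ.v i).1| ≤ M ∧ |(γ.v i).2| ≤ M := by
    refine ⟨(((Finset.range γ.n).sup fun i => ((γ.v i).1.natAbs ⊔ (γ.v i).2.natAbs) : ℕ) : ℤ),
      fun i => ?_⟩
    have hlt : i % γ.n < γ.n := Nat.mod_lt _ (by have := γ.four_le; omega)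
    have hle := Finset.le_sup (f := fun i => ((γ.v i).1.natAbs ⊔ (γ.v i).2.natAbs))
      (Finset.mem_range.mpr hlt)
    rw [γ.v_mod i] at hle
    constructor
    · rw [Int.abs_eq_natAbs]; exact_mod_cast le_trans (le_max_left _ _) hle
    · rw [Int.abs_eq_natAbs]; exact_mod_cast le_trans (le_max_right _ _) hle
  apply Set.Finite.subset (Set.finite_Icc ((-M - 2, -M - 2) : ℤ × ℤ) ((M + 2, M + 2) : ℤ × ℤ))
  intro u hu
  simp only [Function.mem_support, Wfun, Int.cast_ne_zero] at hu
  have hw : wind γ (corner u 1 1) ≠ 0 := hu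
  have h1 : ¬ ((M : ℝ) ≤ (corner u 1 1).1 ∨ (corner u 1 1).1 ≤ -(M : ℝ) - 1 ∨
      (M : ℝ) + 1 ≤ (corner u 1 1).2 ∨ (corner u 1 1).2 < -(M : ℝ)) := by
    intro hc; exact hw (wind_eq_zero_outside γ M hM _ hc)
  push_neg at h1
  obtain ⟨a1, a2, a3, a4⟩ := h1
  simp only [corner, Int.cast_one] at a1 a2 a3 a4
  constructor <;> constructor <;> simp only []
  · have : (-M - 2 : ℝ) ≤ (u.1 : ℝ) := by linarith
    exact_mod_cast this
  · have : (-M - 2 : ℝ) ≤ (u.2 : ℝ) := by linarith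
    exact_mod_cast this
  · have : (u.1 : ℝ) ≤ (M + 2 : ℝ) := by linarith
    exact_mod_cast this
  · have : (u.2 : ℝ) ≤ (M + 2 : ℝ) := by linarith
    exact_mod_cast this

lemma corner_mm (v : ℤ × ℤ) : corner v (-1) (-1) = corner (v - (1, 1)) 1 1 := by
  simp only [corner, Prod.fst_sub, Prod.snd_sub, Prod.mk.injEq]
  constructor <;> push_cast <;> ring

lemma corner_mp (v : ℤ × ℤ) : corner v (-1) 1 = corner (v - (1, 0)) 1 1 := by
  simp only [corner, Prod.fst_sub, Prod.snd_sub, Prod.mk.injEq]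
  constructor <;> push_cast <;> ring

lemma corner_pm (v : ℤ × ℤ) : corner v 1 (-1) = corner (v - (0, 1)) 1 1 := by
  simp only [corner, Prod.fst_sub, Prod.snd_sub, Prod.mk.injEq]
  constructor <;> push_cast <;> ring

lemma col_metricw_eq (γ : LatticeCycle) (v : ℤ × ℤ) :
    (col v : ℚ) * metricw γ v =
      ((col v : ℚ) * Wfun γ (v - (1, 1)) + (col v : ℚ) * Wfun γ (v - (1, 0)) +
       (col v : ℚ) * Wfun γ (v - (0, 1)) + (col v : ℚ) * Wfun γ v) / 4 := by
  unfold metricw Wfun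
  rw [corner_mm, corner_mp, corner_pm]
  push_cast
  ring

lemma col_add_one_zero (v : ℤ × ℤ) : (col (v + (1, 0)) : ℚ) = -(col v : ℚ) := by
  have : col (v + (1, 0)) = -col v := by
    simp only [col, Prod.fst_add, Prod.snd_add, Int.even_iff]
    split_ifs <;> omega
  rw [this]; push_cast; ring

lemma col_add_zero_one (v : ℤ × ℤ) : (col (v + (0, 1)) : ℚ) = -(col v : ℚ) := by
  have : col (v + (0, 1)) = -col v := by
    simp only [col, Prod.fst_add, Prod.snd_add, Int.even_iff]
    split_ifs <;> omega
  rw [this]; push_cast; ring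

lemma col_add_one_one (v : ℤ × ℤ) : (col (v + (1, 1)) : ℚ) = (col v : ℚ) := by
  have : col (v + (1, 1)) = col v := by
    simp only [col, Prod.fst_add, Prod.snd_add, Int.even_iff]
    split_ifs <;> omega
  rw [this]

lemma support_shift_finite (γ : LatticeCycle) (d : ℤ × ℤ) :
    (Function.support (fun v : ℤ × ℤ => (col v : ℚ) * Wfun γ (v - d))).Finite := by
  apply Set.Finite.subset ((Wfun_support_finite γ).image (· + d))
  intro v hv
  simp only [Function.mem_support] at hv
  have : Wfun γ (v - d) ≠ 0 := fun h => hv (by rw [h, mul_zero])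
  exact ⟨v - d, this, sub_add_cancel v d⟩

lemma finsum_shift (γ : LatticeCycle) (d : ℤ × ℤ) :
    (∑ᶠ v : ℤ × ℤ, (col v : ℚ) * Wfun γ (v - d)) =
      ∑ᶠ u : ℤ × ℤ, (col (u + d) : ℚ) * Wfun γ u := by
  rw [← finsum_comp_equiv (Equiv.addRight d) (f := fun v : ℤ × ℤ => (col v : ℚ) * Wfun γ (v - d))]
  refine finsum_congr fun u => ?_
  simp [Equiv.coe_addRight, add_sub_cancel_right]

/-- Lemma 3.2: `Σ_{v ∈ ℤ²} col(v)·metricw(γ,v) = 0`, the sum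
having only finitely many nonzero terms. -/
theorem sum_col_metricw_eq_zero (γ : LatticeCycle) :
    (Function.support (fun v : ℤ × ℤ => (col v : ℚ) * metricw γ v)).Finite ∧
    ∑ᶠ v : ℤ × ℤ, (col v : ℚ) * metricw γ v = 0 := by
  set f1 : ℤ × ℤ → ℚ := fun v => (col v : ℚ) * Wfun γ (v - (1, 1)) with hf1
  set f2 : ℤ × ℤ → ℚ := fun v => (col v : ℚ) * Wfun γ (v - (1, 0)) with hf2
  set f3 : ℤ × ℤ → ℚ := fun v => (col v : ℚ) * Wfun γ (v - (0, 1)) with hf3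
  set f4 : ℤ × ℤ → ℚ := fun v => (col v : ℚ) * Wfun γ v with hf4
  have h1 : (Function.support f1).Finite := support_shift_finite γ (1, 1)
  have h2 : (Function.support f2).Finite := support_shift_finite γ (1, 0)
  have h3 : (Function.support f3).Finite := support_shift_finite γ (0, 1)
  have h4 : (Function.support f4).Finite := by
    have := support_shift_finite γ 0
    simpa [hf4] using this
  have hadd : ∀ {f g : ℤ × ℤ → ℚ}, (Function.support f).Finite →
      (Function.support g).Finite → (Function.support (fun v => f v + g v)).Finite := by
    intro f g hf hg
    exact (hf.union hg).subset (Function.support_add f g)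
  have h12 : (Function.support (fun v => f1 v + f2 v)).Finite := hadd h1 h2
  have h123 : (Function.support (fun v => f1 v + f2 v + f3 v)).Finite := hadd h12 h3
  have h1234 : (Function.support (fun v => f1 v + f2 v + f3 v + f4 v)).Finite := hadd h123 h4
  have heq : (fun v : ℤ × ℤ => (col v : ℚ) * metricw γ v) =
      fun v => (f1 v + f2 v + f3 v + f4 v) * (1 / 4) := by
    funext v
    rw [hf1, hf2, hf3, hf4]
    have := col_metricw_eq γ v
    rw [this]
    ring
  constructor
  · rw [heq]
    apply Set.Finite.subset h1234
    intro v hv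
    simp only [Function.mem_support] at hv ⊢
    intro h
    exact hv (by rw [h, zero_mul])
  · rw [heq, ← finsum_mul _ _, finsum_add_distrib h123 h4,
      finsum_add_distrib h12 h3, finsum_add_distrib h1 h2]
    have s1 : (∑ᶠ v : ℤ × ℤ, f1 v) = ∑ᶠ u : ℤ × ℤ, (col u : ℚ) * Wfun γ u := by
      rw [hf1, finsum_shift γ (1, 1)]
      exact finsum_congr fun u => by rw [col_add_one_one]
    have s2 : (∑ᶠ v : ℤ × ℤ, f2 v) = -∑ᶠ u : ℤ × ℤ, (col u : ℚ) * Wfun γ u := by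
      rw [hf2, finsum_shift γ (1, 0), ← finsum_neg_distrib]
      exact finsum_congr fun u => by rw [col_add_one_zero]; ring
    have s3 : (∑ᶠ v : ℤ × ℤ, f3 v) = -∑ᶠ u : ℤ × ℤ, (col u : ℚ) * Wfun γ u := by
      rw [hf3, finsum_shift γ (0, 1), ← finsum_neg_distrib]
      exact finsum_congr fun u => by rw [col_add_zero_one]; ring
    rw [s1, s2, s3, hf4]
    ring
end
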